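/- arXiv:1510.04043 — 5 statements merged into one kernel-verified Lean document; each statement's English description precedes it below -/
import Mathlib

section
/- (Submodularity inequality) Let X, Y, Z be three independent ℝ^d-valued random variables such that the distributions of Y, X+Y, Y+Z and X+Y+Z are absolutely continuous with respect to Lebesgue measure and have finite differential entropy. Then H(X+Y+Z) + H(Y) ≤ H(X+Y) + H(Y+Z). -/
open MeasureTheory ProbabilityTheory

/-- Convolution of two measures on an additive monoid: the law of the sum of two independent
random variables with these laws. -/
noncomputable def mconv {E : Type*} [MeasurableSpace E] [Add E] (μ ν : Measure E) : Measure E :=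
  (μ.prod ν).map (fun p => p.1 + p.2)

/-- The differential entropy (base 2) `H(μ) = -∫ f log₂ f` of a measure `μ` with density `f`
with respect to Lebesgue measure (junk value if `μ` is not absolutely continuous or the
integrand is not integrable). -/
noncomputable def diffEnt {E : Type*} [MeasureSpace E] (μ : Measure E) : ℝ :=
  -∫ x, ((μ.rnDeriv volume x).toReal) * Real.logb 2 ((μ.rnDeriv volume x).toReal) ∂(volume : Measure E)

/-- `μ` is absolutely continuous with finite (i.e. well-defined) differential entropy. -/
def HasDiffEnt {E : Type*} [MeasureSpace E] (μ : Measure E) : Prop :=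
  μ ≪ (volume : Measure E) ∧
    Integrable (fun x => ((μ.rnDeriv volume x).toReal) * Real.logb 2 ((μ.rnDeriv volume x).toReal))
      (volume : Measure E)

/-- The standard Gaussian measure on `ℝ^d`. -/
noncomputable def stdGauss (d : ℕ) : Measure (Fin d → ℝ) :=
  Measure.pi (fun _ : Fin d => gaussianReal 0 1)

/-- The centered Gaussian measure on `ℝ^d` with covariance matrix `B·Bᵀ`, i.e. the law
of `G_B = B·G` for `G` standard Gaussian. -/
noncomputable def gaussMat {d : ℕ} (B : Matrix (Fin d) (Fin d) ℝ) : Measure (Fin d → ℝ) :=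
  (stdGauss d).map (fun x => B.mulVec x)

/-- `H(X; B) = H(X + G_B) - H(G_B)` where `G_B` is an independent centered Gaussian vector
with covariance `B·Bᵀ`, expressed via the law `μ` of `X`. -/
noncomputable def entAt {d : ℕ} (μ : Measure (Fin d → ℝ)) (B : Matrix (Fin d) (Fin d) ℝ) : ℝ :=
  diffEnt (mconv μ (gaussMat B)) - diffEnt (gaussMat B)

/-- `H(X; B₁ | B₂) = H(X; B₁) - H(X; B₂)`, expressed via the law `μ` of `X`. -/
noncomputable def entBetween {d : ℕ} (μ : Measure (Fin d → ℝ))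
    (B₁ B₂ : Matrix (Fin d) (Fin d) ℝ) : ℝ :=
  entAt μ B₁ - entAt μ B₂


open scoped ENNReal

section AuxLemmas

variable {d : ℕ}

lemma aux_conv_density (μ : Measure (Fin d → ℝ)) [SFinite μ] (f : (Fin d → ℝ) → ℝ≥0∞)
    (hf : Measurable f) :
    (μ.prod (volume.withDensity f)).map (fun p => p.1 + p.2)
      = volume.withDensity (fun w => ∫⁻ x, f (w - x) ∂μ) := by
  have hadd : Measurable (fun p : (Fin d → ℝ) × (Fin d → ℝ) => p.1 + p.2) :=
    measurable_fst.add measurable_snd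
  ext s hs
  rw [Measure.map_apply hadd hs, Measure.prod_apply (hadd hs), withDensity_apply _ hs]
  have hslice : ∀ x : Fin d → ℝ,
      (volume.withDensity f) (Prod.mk x ⁻¹' ((fun p : (Fin d → ℝ) × (Fin d → ℝ) => p.1 + p.2) ⁻¹' s))
        = ∫⁻ w, s.indicator (fun _ => (1:ℝ≥0∞)) w * f (w - x) ∂volume := by
    intro x
    have hset : (Prod.mk x ⁻¹' ((fun p : (Fin d → ℝ) × (Fin d → ℝ) => p.1 + p.2) ⁻¹' s))
        = (fun y => x + y) ⁻¹' s := rfl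
    have hmeas : MeasurableSet ((fun y => x + y) ⁻¹' s) := (measurable_const_add x) hs
    rw [hset, withDensity_apply _ hmeas, ← lintegral_indicator hmeas]
    have heq : ∀ y, ((fun y => x + y) ⁻¹' s).indicator f y
        = (fun w => s.indicator (fun _ => (1:ℝ≥0∞)) w * f (w - x)) (x + y) := by
      intro y
      by_cases h : x + y ∈ s <;>
        simp [Set.indicator, h, add_sub_cancel_left]
    rw [lintegral_congr heq, lintegral_add_left_eq_self
      (fun w => s.indicator (fun _ => (1:ℝ≥0∞)) w * f (w - x)) x]
  simp_rw [hslice]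
  rw [lintegral_lintegral_swap
    (((measurable_one.indicator hs).comp measurable_snd).mul
      (hf.comp (measurable_snd.sub measurable_fst))).aemeasurable]
  have : ∀ w, ∫⁻ x, s.indicator (fun _ => (1:ℝ≥0∞)) w * f (w - x) ∂μ
      = s.indicator (fun _ => (1:ℝ≥0∞)) w * ∫⁻ x, f (w - x) ∂μ := fun w =>
    lintegral_const_mul _ (hf.comp (measurable_const.sub measurable_id))
  simp_rw [this]
  rw [← lintegral_indicator hs]
  apply lintegral_congr
  intro w
  by_cases h : w ∈ s <;> simp [Set.indicator, h]

lemma aux_transfer {α : Type*} [MeasurableSpace α] (Pi : Measure α) (W : Measure (Fin d → ℝ))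
    [SigmaFinite W] (hW : HasDiffEnt W) {Φ : α → Fin d → ℝ} (hΦ : Measurable Φ)
    (hmap : Pi.map Φ = W) :
    Integrable (fun a => Real.log ((W.rnDeriv volume (Φ a)).toReal)) Pi ∧
    ∫ a, Real.log ((W.rnDeriv volume (Φ a)).toReal) ∂Pi
      = ∫ x, (W.rnDeriv volume x).toReal * Real.log ((W.rnDeriv volume x).toReal) ∂volume ∧
    ∀ᵐ a ∂Pi, 0 < (W.rnDeriv volume (Φ a)).toReal := by
  have hwmeas : Measurable (fun x => (W.rnDeriv volume x).toReal) :=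
    (Measure.measurable_rnDeriv W volume).ennreal_toReal
  have hLmeas : Measurable (fun x => Real.log ((W.rnDeriv volume x).toReal)) :=
    Real.measurable_log.comp hwmeas
  have hlog2 : Real.log 2 ≠ 0 := ne_of_gt (Real.log_pos (by norm_num))
  have hint_vol : Integrable
      (fun x => (W.rnDeriv volume x).toReal * Real.log ((W.rnDeriv volume x).toReal)) volume := by
    have h := hW.2.mul_const (Real.log 2)
    refine h.congr (Filter.Eventually.of_forall fun x => ?_)
    simp only [Real.logb]
    field_simp
  have hint_W : Integrable (fun x => Real.log ((W.rnDeriv volume x).toReal)) W := by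
    rw [← integrable_rnDeriv_smul_iff hW.1]
    simpa [smul_eq_mul] using hint_vol
  have hval_W : ∫ x, Real.log ((W.rnDeriv volume x).toReal) ∂W
      = ∫ x, (W.rnDeriv volume x).toReal * Real.log ((W.rnDeriv volume x).toReal) ∂volume := by
    rw [← integral_rnDeriv_smul hW.1 (f := fun x => Real.log ((W.rnDeriv volume x).toReal))]
    simp [smul_eq_mul]
  refine ⟨?_, ?_, ?_⟩
  · exact (integrable_map_measure hLmeas.aestronglyMeasurable hΦ.aemeasurable).mp
      (by rwa [hmap])
  · calc ∫ a, Real.log ((W.rnDeriv volume (Φ a)).toReal) ∂Pi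
        = ∫ x, Real.log ((W.rnDeriv volume x).toReal) ∂(Pi.map Φ) :=
          (integral_map hΦ.aemeasurable hLmeas.aestronglyMeasurable).symm
      _ = _ := by rw [hmap, hval_W]
  · have h0 : W {x | W.rnDeriv volume x = 0} = 0 := by
      set s := {x | W.rnDeriv volume x = 0} with hs_def
      have hms : MeasurableSet s :=
        (Measure.measurable_rnDeriv W volume) (measurableSet_singleton 0)
      nth_rewrite 1 [← Measure.withDensity_rnDeriv_eq W volume hW.1]
      rw [withDensity_apply _ hms,
        setLIntegral_congr_fun hms (fun x hx => hx),
        lintegral_zero]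
    have htop : W {x | W.rnDeriv volume x = ∞} = 0 := by
      apply hW.1
      simpa using ae_iff.mp (Measure.rnDeriv_lt_top W volume)
    have hae : ∀ᵐ x ∂W, 0 < (W.rnDeriv volume x).toReal := by
      have h1 : ∀ᵐ x ∂W, W.rnDeriv volume x ≠ 0 := by
        rw [ae_iff]; simpa using h0
      have h2 : ∀ᵐ x ∂W, W.rnDeriv volume x ≠ ∞ := by
        rw [ae_iff]; simpa using htop
      filter_upwards [h1, h2] with x hx1 hx2
      exact ENNReal.toReal_pos hx1 hx2
    have hset : MeasurableSet {x | 0 < (W.rnDeriv volume x).toReal} :=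
      measurableSet_lt measurable_const hwmeas
    exact (ae_map_iff hΦ.aemeasurable hset).mp (by rwa [hmap])

set_option maxHeartbeats 1000000 in
lemma aux_J (μ ζ : Measure (Fin d → ℝ)) [IsProbabilityMeasure μ] [IsProbabilityMeasure ζ]
    (pbar qbar rbar sbar : (Fin d → ℝ) → ℝ≥0∞)
    (hpm : Measurable pbar) (hqm : Measurable qbar) (hrm : Measurable rbar) (hsm : Measurable sbar)
    (hp_ae : ∀ᵐ y ∂(volume : Measure (Fin d → ℝ)), pbar y ≠ ∞)
    (hs_ae : ∀ᵐ w ∂(volume : Measure (Fin d → ℝ)), sbar w ≠ ∞)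
    (hq1 : ∫⁻ u, qbar u ∂(volume : Measure (Fin d → ℝ)) = 1)
    (hsconv : ∀ᵐ w ∂(volume : Measure (Fin d → ℝ)), sbar w = ∫⁻ x, rbar (w - x) ∂μ) :
    ∫⁻ ω : (Fin d → ℝ) × ((Fin d → ℝ) × (Fin d → ℝ)),
      ENNReal.ofReal ((qbar (ω.1 + ω.2.2)).toReal * (rbar (ω.2.2 + ω.2.1)).toReal
        / ((pbar ω.2.2).toReal * (sbar (ω.1 + ω.2.2 + ω.2.1)).toReal))
      ∂(μ.prod (ζ.prod (volume.withDensity pbar))) ≤ 1 := by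
  set G : (Fin d → ℝ) × ((Fin d → ℝ) × (Fin d → ℝ)) → ℝ≥0∞ := fun ω =>
    ENNReal.ofReal ((qbar (ω.1 + ω.2.2)).toReal * (rbar (ω.2.2 + ω.2.1)).toReal
        / ((pbar ω.2.2).toReal * (sbar (ω.1 + ω.2.2 + ω.2.1)).toReal)) with hG_def
  have hGm : Measurable G := by rw [hG_def]; fun_prop
  set F : (Fin d → ℝ) → (Fin d → ℝ) → (Fin d → ℝ) → ℝ≥0∞ := fun x z u =>
    ENNReal.ofReal ((qbar u).toReal * (rbar (u + z - x)).toReal / (sbar (u + z)).toReal)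
    with hF_def
  have hFm : Measurable (fun t : (Fin d → ℝ) × (Fin d → ℝ) × (Fin d → ℝ) => F t.1 t.2.1 t.2.2) := by
    rw [hF_def]; fun_prop
  have real_key : ∀ (py a sv : ℝ), 0 ≤ py → 0 ≤ a → 0 ≤ sv →
      py * (a / (py * sv)) ≤ a / sv := by
    intro py a sv hpy ha hsv
    by_cases h0 : py = 0
    · simp [h0]; positivity
    by_cases hs0 : sv = 0
    · simp [hs0]
    · apply le_of_eq; field_simp
  have inner_bound : ∀ x z : Fin d → ℝ,
      ∫⁻ y, pbar y * G (x, (z, y)) ∂(volume : Measure (Fin d → ℝ))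
        ≤ ∫⁻ u, F x z u ∂(volume : Measure (Fin d → ℝ)) := by
    intro x z
    have step3 : ∫⁻ y, pbar y * G (x, (z, y)) ∂(volume : Measure (Fin d → ℝ))
        ≤ ∫⁻ y, F x z (x + y) ∂(volume : Measure (Fin d → ℝ)) := by
      apply lintegral_mono_ae
      filter_upwards [hp_ae] with y hy
      have harg : x + y + z - x = y + z := by abel
      simp only [hG_def, hF_def, harg]
      by_cases h0 : pbar y = 0
      · simp [h0]
      · have hrepr : pbar y = ENNReal.ofReal ((pbar y).toReal) := (ENNReal.ofReal_toReal hy).symm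
        nth_rewrite 1 [hrepr]
        rw [← ENNReal.ofReal_mul ENNReal.toReal_nonneg]
        apply ENNReal.ofReal_le_ofReal
        exact real_key _ _ _ ENNReal.toReal_nonneg
          (mul_nonneg ENNReal.toReal_nonneg ENNReal.toReal_nonneg) ENNReal.toReal_nonneg
    calc ∫⁻ y, pbar y * G (x, (z, y)) ∂(volume : Measure (Fin d → ℝ))
        ≤ ∫⁻ y, F x z (x + y) ∂(volume : Measure (Fin d → ℝ)) := step3
      _ = ∫⁻ u, F x z u ∂(volume : Measure (Fin d → ℝ)) :=
          lintegral_add_left_eq_self (fun u => F x z u) x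
  have hsplit : ∫⁻ ω, G ω ∂(μ.prod (ζ.prod (volume.withDensity pbar)))
      = ∫⁻ x, ∫⁻ z, ∫⁻ y, pbar y * G (x, (z, y))
          ∂(volume : Measure (Fin d → ℝ)) ∂ζ ∂μ := by
    rw [lintegral_prod G hGm.aemeasurable]
    apply lintegral_congr; intro x
    rw [lintegral_prod (fun v => G (x, v)) ((hGm.comp measurable_prodMk_left).aemeasurable)]
    apply lintegral_congr; intro z
    rw [lintegral_withDensity_eq_lintegral_mul _ hpm
      (show Measurable (fun y => G (x, (z, y))) from
        (hGm.comp measurable_prodMk_left).comp measurable_prodMk_left)]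
    rfl
  have hz_bound : ∀ z : Fin d → ℝ, ∀ᵐ u ∂(volume : Measure (Fin d → ℝ)),
      ∫⁻ x, F x z u ∂μ ≤ qbar u := by
    intro z
    have hmp : MeasurePreserving (fun u : Fin d → ℝ => u + z) volume volume :=
      measurePreserving_add_right volume z
    have h1 : ∀ᵐ u ∂(volume : Measure (Fin d → ℝ)),
        sbar (u + z) = ∫⁻ x, rbar (u + z - x) ∂μ :=
      hmp.quasiMeasurePreserving.ae hsconv
    have h2 : ∀ᵐ u ∂(volume : Measure (Fin d → ℝ)), sbar (u + z) ≠ ∞ :=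
      hmp.quasiMeasurePreserving.ae hs_ae
    filter_upwards [h1, h2] with u hu1 hu2
    have hd : 0 ≤ (qbar u).toReal / (sbar (u + z)).toReal :=
      div_nonneg ENNReal.toReal_nonneg ENNReal.toReal_nonneg
    calc ∫⁻ x, F x z u ∂μ
        = ∫⁻ x, ENNReal.ofReal ((qbar u).toReal / (sbar (u + z)).toReal)
            * ENNReal.ofReal ((rbar (u + z - x)).toReal) ∂μ := by
          apply lintegral_congr; intro x
          rw [hF_def, ← ENNReal.ofReal_mul hd]
          congr 1
          ring
      _ = ENNReal.ofReal ((qbar u).toReal / (sbar (u + z)).toReal)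
            * ∫⁻ x, ENNReal.ofReal ((rbar (u + z - x)).toReal) ∂μ :=
          lintegral_const_mul _ (by fun_prop)
      _ ≤ ENNReal.ofReal ((qbar u).toReal / (sbar (u + z)).toReal)
            * ∫⁻ x, rbar (u + z - x) ∂μ :=
          mul_le_mul_right (lintegral_mono fun x => ENNReal.ofReal_toReal_le) _
      _ = ENNReal.ofReal ((qbar u).toReal / (sbar (u + z)).toReal) * sbar (u + z) := by
          rw [← hu1]
      _ ≤ qbar u := by
          by_cases hs0 : sbar (u + z) = 0
          · simp [hs0]
          · have hst : (sbar (u + z)).toReal ≠ 0 :=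
              ENNReal.toReal_ne_zero.mpr ⟨hs0, hu2⟩
            nth_rewrite 2 [(ENNReal.ofReal_toReal hu2).symm]
            rw [← ENNReal.ofReal_mul hd, div_mul_cancel₀ _ hst]
            exact ENNReal.ofReal_toReal_le
  calc ∫⁻ ω, G ω ∂(μ.prod (ζ.prod (volume.withDensity pbar)))
      = ∫⁻ x, ∫⁻ z, ∫⁻ y, pbar y * G (x, (z, y))
          ∂(volume : Measure (Fin d → ℝ)) ∂ζ ∂μ := hsplit
    _ ≤ ∫⁻ x, ∫⁻ z, ∫⁻ u, F x z u ∂(volume : Measure (Fin d → ℝ)) ∂ζ ∂μ :=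
        lintegral_mono fun x => lintegral_mono fun z => inner_bound x z
    _ = ∫⁻ z, ∫⁻ x, ∫⁻ u, F x z u ∂(volume : Measure (Fin d → ℝ)) ∂μ ∂ζ := by
        apply lintegral_lintegral_swap
        apply Measurable.aemeasurable
        exact Measurable.lintegral_prod_right'
          (f := fun t : ((Fin d → ℝ) × (Fin d → ℝ)) × (Fin d → ℝ) => F t.1.1 t.1.2 t.2)
          (hFm.comp (((measurable_fst.comp measurable_fst).prodMk
            ((measurable_snd.comp measurable_fst).prodMk measurable_snd))))
    _ = ∫⁻ z, ∫⁻ u, ∫⁻ x, F x z u ∂μ ∂(volume : Measure (Fin d → ℝ)) ∂ζ := by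
        apply lintegral_congr; intro z
        exact lintegral_lintegral_swap
          ((hFm.comp (measurable_fst.prodMk
            (measurable_const.prodMk measurable_snd))).aemeasurable)
    _ ≤ ∫⁻ z, ∫⁻ u, qbar u ∂(volume : Measure (Fin d → ℝ)) ∂ζ :=
        lintegral_mono fun z => lintegral_mono_ae (hz_bound z)
    _ = 1 := by rw [hq1]; simp

end AuxLemmas

set_option maxHeartbeats 1000000 in
/-- Submodularity inequality: if `X, Y, Z` are independent `ℝ^d`-valued random variables such
that `Y`, `X+Y`, `Y+Z`, `X+Y+Z` have absolutely continuous laws with finite differential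
entropy, then `H(X+Y+Z) + H(Y) ≤ H(X+Y) + H(Y+Z)`. -/
theorem stmt8 {d : ℕ} {Ω : Type*} [MeasurableSpace Ω] (P : Measure Ω) [IsProbabilityMeasure P]
    (X Y Z : Ω → (Fin d → ℝ)) (hX : Measurable X) (hY : Measurable Y) (hZ : Measurable Z)
    (hindep : iIndepFun ![X, Y, Z] P)
    (h1 : HasDiffEnt (P.map Y))
    (h2 : HasDiffEnt (P.map (fun ω => X ω + Y ω)))
    (h3 : HasDiffEnt (P.map (fun ω => Y ω + Z ω)))
    (h4 : HasDiffEnt (P.map (fun ω => X ω + Y ω + Z ω))) :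
    diffEnt (P.map (fun ω => X ω + Y ω + Z ω)) + diffEnt (P.map Y) ≤
      diffEnt (P.map (fun ω => X ω + Y ω)) + diffEnt (P.map (fun ω => Y ω + Z ω)) := by
  classical
  -- probability instances for the laws
  haveI : IsProbabilityMeasure (P.map X) := Measure.isProbabilityMeasure_map hX.aemeasurable
  haveI : IsProbabilityMeasure (P.map Y) := Measure.isProbabilityMeasure_map hY.aemeasurable
  haveI : IsProbabilityMeasure (P.map Z) := Measure.isProbabilityMeasure_map hZ.aemeasurable
  haveI : IsProbabilityMeasure (P.map (fun ω => X ω + Y ω)) :=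
    Measure.isProbabilityMeasure_map (hX.add hY).aemeasurable
  haveI : IsProbabilityMeasure (P.map (fun ω => Y ω + Z ω)) :=
    Measure.isProbabilityMeasure_map (hY.add hZ).aemeasurable
  haveI : IsProbabilityMeasure (P.map (fun ω => X ω + Y ω + Z ω)) :=
    Measure.isProbabilityMeasure_map ((hX.add hY).add hZ).aemeasurable
  -- independence: joint law of (X, (Z, Y)) is the product measure
  have hmeas3 : ∀ i, Measurable (![X, Y, Z] i) := by
    intro i; fin_cases i <;> simpa
  have hZYm : Measurable (fun ω => (Z ω, Y ω)) := hZ.prodMk hY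
  have hindZY_X : IndepFun (fun ω => (Z ω, Y ω)) X P := by
    have := hindep.indepFun_prodMk hmeas3 2 1 0 (by decide) (by decide)
    simpa using this
  have hindZ_Y : IndepFun Z Y P := by
    have := hindep.indepFun (show (2 : Fin 3) ≠ 1 by decide)
    simpa using this
  have hjZY : P.map (fun ω => (Z ω, Y ω)) = (P.map Z).prod (P.map Y) :=
    (indepFun_iff_map_prod_eq_prod_map_map hZ.aemeasurable hY.aemeasurable).mp hindZ_Y
  have hjoint : P.map (fun ω => (X ω, (Z ω, Y ω)))
      = (P.map X).prod ((P.map Z).prod (P.map Y)) := by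
    rw [(indepFun_iff_map_prod_eq_prod_map_map hX.aemeasurable hZYm.aemeasurable).mp
      hindZY_X.symm, hjZY]
  have hXZYm : Measurable (fun ω => (X ω, (Z ω, Y ω))) := hX.prodMk hZYm
  set μ := P.map X with hμ_def
  set ζ := P.map Z with hζ_def
  set ν := P.map Y with hν_def
  set Q := P.map (fun ω => X ω + Y ω) with hQ_def
  set R := P.map (fun ω => Y ω + Z ω) with hR_def
  set S := P.map (fun ω => X ω + Y ω + Z ω) with hS_def
  haveI : IsProbabilityMeasure (μ.prod (ζ.prod ν)) := by infer_instance
  -- the four projection maps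
  have hΦp : Measurable (fun ω : (Fin d → ℝ) × ((Fin d → ℝ) × (Fin d → ℝ)) => ω.2.2) := by
    fun_prop
  have hΦq : Measurable (fun ω : (Fin d → ℝ) × ((Fin d → ℝ) × (Fin d → ℝ)) => ω.1 + ω.2.2) := by
    fun_prop
  have hΦr : Measurable (fun ω : (Fin d → ℝ) × ((Fin d → ℝ) × (Fin d → ℝ)) => ω.2.2 + ω.2.1) := by
    fun_prop
  have hΦs : Measurable
      (fun ω : (Fin d → ℝ) × ((Fin d → ℝ) × (Fin d → ℝ)) => ω.1 + ω.2.2 + ω.2.1) := by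
    fun_prop
  have hmapp : (μ.prod (ζ.prod ν)).map (fun ω => ω.2.2) = ν := by
    rw [← hjoint, Measure.map_map hΦp hXZYm]; rfl
  have hmapq : (μ.prod (ζ.prod ν)).map (fun ω => ω.1 + ω.2.2) = Q := by
    rw [← hjoint, Measure.map_map hΦq hXZYm]; rfl
  have hmapr : (μ.prod (ζ.prod ν)).map (fun ω => ω.2.2 + ω.2.1) = R := by
    rw [← hjoint, Measure.map_map hΦr hXZYm]; rfl
  have hmaps : (μ.prod (ζ.prod ν)).map (fun ω => ω.1 + ω.2.2 + ω.2.1) = S := by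
    rw [← hjoint, Measure.map_map hΦs hXZYm]; rfl
  -- S as a convolution of μ and R
  have hg : Measurable (fun v : (Fin d → ℝ) × (Fin d → ℝ) => v.2 + v.1) := by fun_prop
  have hRalt : (ζ.prod ν).map (fun v => v.2 + v.1) = R := by
    rw [hζ_def, hν_def, ← hjZY, Measure.map_map hg hZYm]; rfl
  have hmapPairs : (μ.prod (ζ.prod ν)).map (fun ω => (ω.1, ω.2.2 + ω.2.1)) = μ.prod R := by
    have h := Measure.map_prod_map μ (ζ.prod ν) measurable_id hg
    rw [Measure.map_id, hRalt] at h
    rw [h]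
    congr 1
  have hSalt : S = (μ.prod R).map (fun p : ((Fin d → ℝ) × (Fin d → ℝ)) => p.1 + p.2) := by
    rw [← hmapPairs, Measure.map_map (g := fun p : ((Fin d → ℝ) × (Fin d → ℝ)) => p.1 + p.2) (measurable_fst.add measurable_snd)
      (measurable_fst.prodMk hΦr), ← hmaps]
    congr 1
    funext ω
    show ω.1 + ω.2.2 + ω.2.1 = ω.1 + (ω.2.2 + ω.2.1)
    rw [add_assoc]
  -- density of S as convolution integral
  have hrbm : Measurable (R.rnDeriv volume) := Measure.measurable_rnDeriv _ _
  have hstm : Measurable (fun w => ∫⁻ x, R.rnDeriv volume (w - x) ∂μ) :=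
    Measurable.lintegral_prod_right'
      (f := fun t : (Fin d → ℝ) × (Fin d → ℝ) => R.rnDeriv volume (t.1 - t.2))
      (hrbm.comp (measurable_fst.sub measurable_snd))
  have hSdens : S = volume.withDensity (fun w => ∫⁻ x, R.rnDeriv volume (w - x) ∂μ) := by
    rw [hSalt]
    conv_lhs => rw [show R = volume.withDensity (R.rnDeriv volume) from
      (Measure.withDensity_rnDeriv_eq R volume h3.1).symm]
    exact aux_conv_density μ (R.rnDeriv volume) hrbm
  have hsae : S.rnDeriv volume =ᵐ[volume] fun w => ∫⁻ x, R.rnDeriv volume (w - x) ∂μ := by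
    nth_rewrite 1 [hSdens]
    exact Measure.rnDeriv_withDensity volume hstm
  -- transfer data
  obtain ⟨hip, hvp, hposp⟩ := aux_transfer (μ.prod (ζ.prod ν)) ν h1 hΦp hmapp
  obtain ⟨hiq, hvq, hposq⟩ := aux_transfer (μ.prod (ζ.prod ν)) Q h2 hΦq hmapq
  obtain ⟨hir, hvr, hposr⟩ := aux_transfer (μ.prod (ζ.prod ν)) R h3 hΦr hmapr
  obtain ⟨his, hvs, hposs⟩ := aux_transfer (μ.prod (ζ.prod ν)) S h4 hΦs hmaps
  -- the function B (raw density notation)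
  set B : (Fin d → ℝ) × ((Fin d → ℝ) × (Fin d → ℝ)) → ℝ := fun ω =>
    (Q.rnDeriv volume (ω.1 + ω.2.2)).toReal * (R.rnDeriv volume (ω.2.2 + ω.2.1)).toReal
      / ((ν.rnDeriv volume ω.2.2).toReal * (S.rnDeriv volume (ω.1 + ω.2.2 + ω.2.1)).toReal)
    with hB_def
  have hQm : Measurable (Q.rnDeriv volume) := Measure.measurable_rnDeriv _ _
  have hνm : Measurable (ν.rnDeriv volume) := Measure.measurable_rnDeriv _ _
  have hSm : Measurable (S.rnDeriv volume) := Measure.measurable_rnDeriv _ _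
  have hBm : Measurable B := by rw [hB_def]; fun_prop
  have hBnn : ∀ ω, 0 ≤ B ω := by
    intro ω; rw [hB_def]
    exact div_nonneg (mul_nonneg ENNReal.toReal_nonneg ENNReal.toReal_nonneg)
      (mul_nonneg ENNReal.toReal_nonneg ENNReal.toReal_nonneg)
  have hν_dens : ν = volume.withDensity (ν.rnDeriv volume) :=
    (Measure.withDensity_rnDeriv_eq ν volume h1.1).symm
  have hq1 : ∫⁻ u, Q.rnDeriv volume u ∂(volume : Measure (Fin d → ℝ)) = 1 := by
    rw [Measure.lintegral_rnDeriv h2.1]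
    simp
  have hp_ae : ∀ᵐ y ∂(volume : Measure (Fin d → ℝ)), ν.rnDeriv volume y ≠ ∞ :=
    (Measure.rnDeriv_lt_top ν volume).mono fun y h => h.ne
  have hs_ae : ∀ᵐ w ∂(volume : Measure (Fin d → ℝ)), S.rnDeriv volume w ≠ ∞ :=
    (Measure.rnDeriv_lt_top S volume).mono fun w h => h.ne
  have hJ : ∫⁻ ω, ENNReal.ofReal (B ω) ∂(μ.prod (ζ.prod ν)) ≤ 1 := by
    rw [show μ.prod (ζ.prod ν)
        = μ.prod (ζ.prod (volume.withDensity (ν.rnDeriv volume))) by rw [← hν_dens]]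
    exact aux_J μ ζ (ν.rnDeriv volume) (Q.rnDeriv volume) (R.rnDeriv volume) (S.rnDeriv volume)
      hνm hQm hrbm hSm hp_ae hs_ae hq1 hsae
  have hBint : Integrable B (μ.prod (ζ.prod ν)) := by
    refine ⟨hBm.aestronglyMeasurable, ?_⟩
    rw [hasFiniteIntegral_iff_ofReal (Filter.Eventually.of_forall hBnn)]
    exact lt_of_le_of_lt hJ ENNReal.one_lt_top
  have hBle1 : ∫ ω, B ω ∂(μ.prod (ζ.prod ν)) ≤ 1 := by
    rw [integral_eq_lintegral_of_nonneg_ae (Filter.Eventually.of_forall hBnn)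
      hBm.aestronglyMeasurable]
    calc (∫⁻ ω, ENNReal.ofReal (B ω) ∂(μ.prod (ζ.prod ν))).toReal
        ≤ (1 : ℝ≥0∞).toReal := ENNReal.toReal_mono ENNReal.one_ne_top hJ
      _ = 1 := by simp
  -- pointwise Gibbs inequality
  set LHSf : (Fin d → ℝ) × ((Fin d → ℝ) × (Fin d → ℝ)) → ℝ := fun ω =>
    Real.log ((ν.rnDeriv volume ω.2.2).toReal)
      - Real.log ((Q.rnDeriv volume (ω.1 + ω.2.2)).toReal)
      - Real.log ((R.rnDeriv volume (ω.2.2 + ω.2.1)).toReal)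
      + Real.log ((S.rnDeriv volume (ω.1 + ω.2.2 + ω.2.1)).toReal) with hLHSf_def
  have hlogineq : ∀ᵐ ω ∂(μ.prod (ζ.prod ν)), 1 - B ω ≤ LHSf ω := by
    filter_upwards [hposp, hposq, hposr, hposs] with ω ha hb hc he
    simp only [hLHSf_def, hB_def]
    set a := (ν.rnDeriv volume ω.2.2).toReal with ha_def
    set b := (Q.rnDeriv volume (ω.1 + ω.2.2)).toReal with hb_def2
    set c := (R.rnDeriv volume (ω.2.2 + ω.2.1)).toReal with hc_def
    set e := (S.rnDeriv volume (ω.1 + ω.2.2 + ω.2.1)).toReal with he_def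
    have key : Real.log a - Real.log b - Real.log c + Real.log e
        = Real.log ((a * e) / (b * c)) := by
      rw [Real.log_div (by positivity) (by positivity), Real.log_mul (ne_of_gt ha) (ne_of_gt he),
        Real.log_mul (ne_of_gt hb) (ne_of_gt hc)]
      ring
    have hlog := Real.log_le_sub_one_of_pos (show (0:ℝ) < (b * c) / (a * e) by positivity)
    have hloginv : Real.log ((b * c) / (a * e)) = -Real.log ((a * e) / (b * c)) := by
      rw [← Real.log_inv, inv_div]
    rw [hloginv] at hlog
    rw [key]
    linarith
  have hLint : Integrable LHSf (μ.prod (ζ.prod ν)) := ((hip.sub hiq).sub hir).add his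
  have hIeq : ∫ ω, LHSf ω ∂(μ.prod (ζ.prod ν))
      = (∫ x, (ν.rnDeriv volume x).toReal * Real.log ((ν.rnDeriv volume x).toReal)
          ∂(volume : Measure (Fin d → ℝ)))
        - (∫ x, (Q.rnDeriv volume x).toReal * Real.log ((Q.rnDeriv volume x).toReal)
          ∂(volume : Measure (Fin d → ℝ)))
        - (∫ x, (R.rnDeriv volume x).toReal * Real.log ((R.rnDeriv volume x).toReal)
          ∂(volume : Measure (Fin d → ℝ)))
        + (∫ x, (S.rnDeriv volume x).toReal * Real.log ((S.rnDeriv volume x).toReal)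
          ∂(volume : Measure (Fin d → ℝ))) := by
    have hi12 : Integrable (fun ω : (Fin d → ℝ) × ((Fin d → ℝ) × (Fin d → ℝ)) =>
        Real.log ((ν.rnDeriv volume ω.2.2).toReal)
          - Real.log ((Q.rnDeriv volume (ω.1 + ω.2.2)).toReal)) (μ.prod (ζ.prod ν)) :=
      hip.sub hiq
    have hi123 : Integrable (fun ω : (Fin d → ℝ) × ((Fin d → ℝ) × (Fin d → ℝ)) =>
        Real.log ((ν.rnDeriv volume ω.2.2).toReal)
          - Real.log ((Q.rnDeriv volume (ω.1 + ω.2.2)).toReal)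
          - Real.log ((R.rnDeriv volume (ω.2.2 + ω.2.1)).toReal)) (μ.prod (ζ.prod ν)) :=
      hi12.sub hir
    simp only [hLHSf_def]
    rw [integral_add hi123 his, integral_sub hi12 hir, integral_sub hip hiq,
      hvp, hvq, hvr, hvs]
  have hmain : (1:ℝ) - ∫ ω, B ω ∂(μ.prod (ζ.prod ν)) ≤ ∫ ω, LHSf ω ∂(μ.prod (ζ.prod ν)) := by
    have h1' : ∫ ω, (1 - B ω) ∂(μ.prod (ζ.prod ν)) ≤ ∫ ω, LHSf ω ∂(μ.prod (ζ.prod ν)) :=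
      integral_mono_ae ((integrable_const 1).sub hBint) hLint hlogineq
    rwa [integral_sub (integrable_const 1) hBint, integral_const, probReal_univ,
      smul_eq_mul, one_mul] at h1'
  have hfinal_log :
      (∫ x, (Q.rnDeriv volume x).toReal * Real.log ((Q.rnDeriv volume x).toReal)
          ∂(volume : Measure (Fin d → ℝ)))
        + (∫ x, (R.rnDeriv volume x).toReal * Real.log ((R.rnDeriv volume x).toReal)
          ∂(volume : Measure (Fin d → ℝ)))
      ≤ (∫ x, (ν.rnDeriv volume x).toReal * Real.log ((ν.rnDeriv volume x).toReal)
          ∂(volume : Measure (Fin d → ℝ)))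
        + (∫ x, (S.rnDeriv volume x).toReal * Real.log ((S.rnDeriv volume x).toReal)
          ∂(volume : Measure (Fin d → ℝ))) := by
    have h0 : (0:ℝ) ≤ ∫ ω, LHSf ω ∂(μ.prod (ζ.prod ν)) := by linarith
    linarith [hIeq]
  -- convert to base-2 entropies
  have hdE : ∀ (W : Measure (Fin d → ℝ)),
      diffEnt W = -((∫ x, (W.rnDeriv volume x).toReal
          * Real.log ((W.rnDeriv volume x).toReal) ∂(volume : Measure (Fin d → ℝ)))
        / Real.log 2) := by
    intro W
    rw [diffEnt, ← integral_div]
    congr 1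
    apply integral_congr_ae
    apply Filter.Eventually.of_forall
    intro x
    simp only [Real.logb]
    ring
  have hL2 : (0:ℝ) < Real.log 2 := Real.log_pos (by norm_num)
  rw [hdE S, hdE ν, hdE Q, hdE R]
  have hinv : (0:ℝ) < (Real.log 2)⁻¹ := by positivity
  simp only [div_eq_mul_inv]
  nlinarith [mul_le_mul_of_nonneg_right hfinal_log (le_of_lt hinv)]
end

section
/- Let X be an absolutely continuous ℝ^d-valued random variable with finite differential entropy, and let {A_n} be an increasing sequence of events of positive probability with lim_{n→∞} P(A_n) = 1. For each n let X|_{A_n} denote a random variable whose law is B ↦ P({X ∈ B} ∩ A_n)/P(A_n). Then H(X) = lim_{n→∞} H(X|_{A_n}). -/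
open MeasureTheory ProbabilityTheory Filter Topology Real
open scoped ENNReal

lemma aux_slogs {C s : ℝ} (hC : 1 ≤ C) (h0 : 0 < s) (hsC : s ≤ C) :
    s * |Real.log s| ≤ 1 + C * Real.log C := by
  have hlogC : 0 ≤ Real.log C := Real.log_nonneg hC
  rcases le_or_gt s 1 with hs1 | hs1
  · have hls : Real.log s ≤ 0 := Real.log_nonpos h0.le hs1
    rw [abs_of_nonpos hls]
    have h1 : Real.log s⁻¹ ≤ s⁻¹ - 1 := Real.log_le_sub_one_of_pos (by positivity)
    rw [Real.log_inv] at h1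
    nlinarith [mul_le_mul_of_nonneg_left h1 h0.le, mul_inv_cancel₀ h0.ne']
  · have hls : 0 ≤ Real.log s := Real.log_nonneg hs1.le
    rw [abs_of_nonneg hls]
    nlinarith [Real.log_le_log h0 hsC]

lemma aux_key0 {C f y : ℝ} (hC : 1 ≤ C) (hy0 : 0 ≤ y) (hyf : y ≤ C * f) :
    |y * Real.log y| ≤ (1 + C * Real.log C) * f + C * |f * Real.log f| := by
  have hC0 : (0:ℝ) < C := lt_of_lt_of_le one_pos hC
  have hf0 : 0 ≤ f := nonneg_of_mul_nonneg_right (hy0.trans hyf) hC0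
  have hlogC : 0 ≤ Real.log C := Real.log_nonneg hC
  rcases eq_or_lt_of_le hy0 with rfl | hy
  · simp; positivity
  · have hf : 0 < f := by nlinarith
    have hs0 : 0 < y / f := div_pos hy hf
    have hsC : y / f ≤ C := (div_le_iff₀ hf).2 (by linarith [hyf])
    have hlog : Real.log y = Real.log (y / f) + Real.log f := by
      rw [Real.log_div hy.ne' hf.ne']; ring
    calc |y * Real.log y| = |y * Real.log (y/f) + y * Real.log f| := by rw [hlog]; ring_nf
      _ ≤ |y * Real.log (y/f)| + |y * Real.log f| := abs_add_le _ _
      _ ≤ (1 + C * Real.log C) * f + C * |f * Real.log f| := by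
          apply add_le_add
          · rw [abs_mul, abs_of_pos hy]
            have : y * |Real.log (y/f)| = f * ((y/f) * |Real.log (y/f)|) := by
              field_simp
            rw [this, mul_comm ((1:ℝ) + C * Real.log C) f]
            exact mul_le_mul_of_nonneg_left (aux_slogs hC hs0 hsC) hf0
          · rw [abs_mul, abs_mul, abs_of_pos hy, abs_of_pos hf]
            calc y * |Real.log f| ≤ (C * f) * |Real.log f| :=
                  mul_le_mul_of_nonneg_right hyf (abs_nonneg _)
              _ = C * (f * |Real.log f|) := by ring

lemma aux_key {C f y : ℝ} (hC : 1 ≤ C) (hy0 : 0 ≤ y) (hyf : y ≤ C * f) :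
    |y * Real.logb 2 y| ≤
      (1 + C * Real.log C) / Real.log 2 * f + C * |f * Real.logb 2 f| := by
  have h2 : (0:ℝ) < Real.log 2 := Real.log_pos one_lt_two
  have h0 := aux_key0 hC hy0 hyf
  have e1 : |y * Real.logb 2 y| = |y * Real.log y| / Real.log 2 := by
    rw [Real.logb, show y * (Real.log y / Real.log 2) = (y * Real.log y) / Real.log 2 by ring,
      abs_div, abs_of_pos h2]
  have e2 : |f * Real.logb 2 f| = |f * Real.log f| / Real.log 2 := by
    rw [Real.logb, show f * (Real.log f / Real.log 2) = (f * Real.log f) / Real.log 2 by ring,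
      abs_div, abs_of_pos h2]
  rw [e1, e2]
  rw [div_le_iff₀ h2]
  have hC0 : (0:ℝ) < C := lt_of_lt_of_le one_pos hC
  calc |y * Real.log y| ≤ (1 + C * Real.log C) * f + C * |f * Real.log f| := h0
    _ = ((1 + C * Real.log C) / Real.log 2 * f + C * (|f * Real.log f| / Real.log 2)) *
        Real.log 2 := by field_simp

lemma aux_rnDeriv_mono {α : Type*} [MeasurableSpace α] {μ₁ μ₂ ν : Measure α}
    [IsFiniteMeasure μ₁] [IsFiniteMeasure μ₂] [SigmaFinite ν]
    (h12 : μ₁ ≤ μ₂) (h1 : μ₁ ≪ ν) (h2 : μ₂ ≪ ν) :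
    μ₁.rnDeriv ν ≤ᵐ[ν] μ₂.rnDeriv ν := by
  refine ae_le_of_forall_setLIntegral_le_of_sigmaFinite (Measure.measurable_rnDeriv _ _)
    (fun s hs _ => ?_)
  rw [Measure.setLIntegral_rnDeriv h1, Measure.setLIntegral_rnDeriv h2]
  exact h12 s

lemma aux_main {E : Type*} [MeasureSpace E] [SigmaFinite (volume : Measure E)]
    (μ : Measure E) [IsProbabilityMeasure μ] (hac : μ ≪ (volume : Measure E))
    (hint : Integrable (fun x => ((μ.rnDeriv volume x).toReal) *
      Real.logb 2 ((μ.rnDeriv volume x).toReal)) (volume : Measure E))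
    (ν : ℕ → Measure E) [hfin : ∀ n, IsFiniteMeasure (ν n)]
    (hle : ∀ n, ν n ≤ μ) (hmn : Monotone ν)
    (hsup : ∀ B, MeasurableSet B → (⨆ n, ν n B) = μ B)
    (c : ℕ → ℝ≥0∞) (hctop : ∀ n, c n ≠ ∞)
    (hcbd : ∀ n, c n ≤ c 0)
    (hclim : Tendsto (fun n => (c n).toReal) atTop (𝓝 1)) :
    Tendsto
      (fun n => -∫ x, (((c n • ν n).rnDeriv volume x).toReal) *
        Real.logb 2 (((c n • ν n).rnDeriv volume x).toReal) ∂(volume : Measure E))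
      atTop
      (𝓝 (-∫ x, ((μ.rnDeriv volume x).toReal) *
        Real.logb 2 ((μ.rnDeriv volume x).toReal) ∂(volume : Measure E))) := by
  set C : ℝ := (c 0).toReal with hCdef
  have hca : ∀ n, (c n).toReal ≤ C := fun n => ENNReal.toReal_mono (hctop 0) (hcbd n)
  have hC1 : 1 ≤ C := le_of_tendsto hclim (Eventually.of_forall hca)
  have hνac : ∀ n, ν n ≪ (volume : Measure E) :=
    fun n => (Measure.absolutelyContinuous_of_le (hle n)).trans hac
  have hFfin : ∀ᵐ x ∂(volume : Measure E), μ.rnDeriv volume x ≠ ∞ :=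
    (Measure.rnDeriv_lt_top μ _).mono fun x h => h.ne
  have hGle : ∀ᵐ x ∂(volume : Measure E),
      ∀ n, (ν n).rnDeriv volume x ≤ μ.rnDeriv volume x :=
    ae_all_iff.2 fun n => aux_rnDeriv_mono (hle n) (hνac n) hac
  have hGmono : ∀ᵐ x ∂(volume : Measure E),
      Monotone fun n => (ν n).rnDeriv volume x := by
    have h : ∀ᵐ x ∂(volume : Measure E),
        ∀ n, (ν n).rnDeriv volume x ≤ (ν (n+1)).rnDeriv volume x :=
      ae_all_iff.2 fun n => aux_rnDeriv_mono (hmn (Nat.le_succ n)) (hνac n) (hνac (n+1))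
    exact h.mono fun x hx => monotone_nat_of_le_succ hx
  have hmeas_sup : Measurable fun x => ⨆ n, (ν n).rnDeriv volume x :=
    Measurable.iSup fun n => Measure.measurable_rnDeriv _ _
  have hwd : (volume : Measure E).withDensity (fun x => ⨆ n, (ν n).rnDeriv volume x) = μ := by
    ext B hB
    rw [withDensity_apply _ hB, ← hsup B hB,
      lintegral_iSup' (fun n => (Measure.measurable_rnDeriv _ _).aemeasurable)
        (ae_restrict_of_ae hGmono)]
    exact iSup_congr fun n => Measure.setLIntegral_rnDeriv (hνac n) B
  have hGsup : (fun x => ⨆ n, (ν n).rnDeriv volume x) =ᵐ[(volume : Measure E)]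
      μ.rnDeriv volume := by
    have h := Measure.rnDeriv_withDensity (volume : Measure E) hmeas_sup
    rw [hwd] at h
    exact h.symm
  have hGtend : ∀ᵐ x ∂(volume : Measure E),
      Tendsto (fun n => ((ν n).rnDeriv volume x).toReal) atTop
        (𝓝 ((μ.rnDeriv volume x).toReal)) := by
    filter_upwards [hGmono, hGsup, hFfin] with x hmx hsx hfx
    have h1 : Tendsto (fun n => (ν n).rnDeriv volume x) atTop (𝓝 (μ.rnDeriv volume x)) := by
      rw [← hsx]; exact tendsto_atTop_iSup hmx
    exact (ENNReal.tendsto_toReal hfx).comp h1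
  have hψ : Continuous fun y : ℝ => y * Real.logb 2 y := by
    have := Real.continuous_mul_log.div_const (Real.log 2)
    simpa [Real.logb, mul_div_assoc] using this
  have hρ : ∀ n, (fun x => (((c n • ν n).rnDeriv volume x).toReal) *
      Real.logb 2 (((c n • ν n).rnDeriv volume x).toReal)) =ᵐ[(volume : Measure E)]
      (fun x => ((c n).toReal * ((ν n).rnDeriv volume x).toReal) *
        Real.logb 2 ((c n).toReal * ((ν n).rnDeriv volume x).toReal)) := by
    intro n
    filter_upwards [Measure.rnDeriv_smul_left_of_ne_top (ν n) volume (hctop n)] with x hx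
    rw [hx]
    simp [ENNReal.toReal_mul]
  have hmeasG : ∀ n, AEStronglyMeasurable (fun x => (((c n • ν n).rnDeriv volume x).toReal) *
      Real.logb 2 (((c n • ν n).rnDeriv volume x).toReal)) (volume : Measure E) :=
    fun n => (hψ.measurable.comp
      ((Measure.measurable_rnDeriv _ _).ennreal_toReal)).aestronglyMeasurable
  have hbound_int : Integrable (fun x =>
      (1 + C * Real.log C) / Real.log 2 * (μ.rnDeriv volume x).toReal +
        C * |(μ.rnDeriv volume x).toReal * Real.logb 2 ((μ.rnDeriv volume x).toReal)|)
      (volume : Measure E) :=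
    ((Measure.integrable_toReal_rnDeriv).const_mul _).add (hint.abs.const_mul _)
  refine Tendsto.neg (tendsto_integral_of_dominated_convergence _ hmeasG hbound_int ?_ ?_)
  · intro n
    filter_upwards [hρ n, hGle, hFfin] with x hx hlex hfx
    rw [Real.norm_eq_abs, hx]
    refine aux_key hC1 (by positivity) ?_
    exact mul_le_mul (hca n) (ENNReal.toReal_mono hfx (hlex n)) ENNReal.toReal_nonneg
      (le_trans zero_le_one hC1)
  · filter_upwards [ae_all_iff.2 hρ, hGtend] with x hx hGx
    have h1 : Tendsto (fun n => (c n).toReal * ((ν n).rnDeriv volume x).toReal) atTop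
        (𝓝 (1 * (μ.rnDeriv volume x).toReal)) := hclim.mul hGx
    rw [one_mul] at h1
    have h2 := (hψ.tendsto _).comp h1
    exact h2.congr fun n => (hx n).symm

/-- If `X` is an absolutely continuous `ℝ^d`-valued random variable with finite differential
entropy and `{A_n}` is an increasing sequence of events with `P(A_n) → 1`, then
`H(X) = lim_n H(X|_{A_n})`, where `X|_{A_n}` has law `B ↦ P({X ∈ B} ∩ A_n)/P(A_n)`. -/
theorem stmt10 {d : ℕ} {Ω : Type*} [MeasurableSpace Ω] (P : Measure Ω) [IsProbabilityMeasure P]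
    (X : Ω → (Fin d → ℝ)) (hX : Measurable X) (hent : HasDiffEnt (P.map X))
    (A : ℕ → Set Ω) (hAmeas : ∀ n, MeasurableSet (A n)) (hmono : Monotone A)
    (hpos : ∀ n, 0 < P (A n))
    (hlim : Filter.Tendsto (fun n => P (A n)) Filter.atTop (nhds 1)) :
    Filter.Tendsto (fun n => diffEnt ((P (A n))⁻¹ • ((P.restrict (A n)).map X)))
      Filter.atTop (nhds (diffEnt (P.map X))) := by
  haveI : IsProbabilityMeasure (P.map X) := Measure.isProbabilityMeasure_map hX.aemeasurable
  have hU1 : P (⋃ n, A n) = 1 := by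
    refine le_antisymm prob_le_one ?_
    exact le_of_tendsto hlim (Eventually.of_forall fun n => measure_mono (Set.subset_iUnion A n))
  have hUc : P (⋃ n, A n)ᶜ = 0 := by
    rw [measure_compl (MeasurableSet.iUnion hAmeas) (measure_ne_top _ _), hU1, measure_univ,
      tsub_self]
  have hsup : ∀ B, MeasurableSet B →
      (⨆ n, ((P.restrict (A n)).map X) B) = (P.map X) B := by
    intro B hB
    have h1 : ∀ n, ((P.restrict (A n)).map X) B = P (X ⁻¹' B ∩ A n) := fun n => by
      rw [Measure.map_apply hX hB, Measure.restrict_apply (hX hB)]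
    have hdir : Directed (· ⊆ ·) fun n => X ⁻¹' B ∩ A n :=
      Monotone.directed_le fun i j h => Set.inter_subset_inter_right _ (hmono h)
    calc (⨆ n, ((P.restrict (A n)).map X) B) = ⨆ n, P (X ⁻¹' B ∩ A n) := by
          simp only [h1]
      _ = P (⋃ n, X ⁻¹' B ∩ A n) := (hdir.measure_iUnion (μ := P)).symm
      _ = P (X ⁻¹' B ∩ ⋃ n, A n) := by rw [← Set.inter_iUnion]
      _ = P (X ⁻¹' B) := measure_inter_conull hUc
      _ = (P.map X) B := (Measure.map_apply hX hB).symm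
  have hclim : Tendsto (fun n => ((P (A n))⁻¹).toReal) atTop (𝓝 1) := by
    have h1 : Tendsto (fun n => (P (A n)).toReal) atTop (𝓝 (1 : ℝ≥0∞).toReal) :=
      (ENNReal.tendsto_toReal (by simp)).comp hlim
    rw [ENNReal.toReal_one] at h1
    have h2 := h1.inv₀ one_ne_zero
    rw [inv_one] at h2
    refine h2.congr fun n => ?_
    rw [ENNReal.toReal_inv]
  exact aux_main (P.map X) hent.1 hent.2 (fun n => (P.restrict (A n)).map X)
    (fun n => Measure.map_mono Measure.restrict_le_self hX)
    (fun n m h => Measure.map_mono (Measure.restrict_mono (hmono h) le_rfl) hX)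
    hsup (fun n => (P (A n))⁻¹)
    (fun n => ENNReal.inv_ne_top.2 (hpos n).ne')
    (fun n => ENNReal.inv_le_inv' (measure_mono (hmono (Nat.zero_le n))))
    hclim
end

section
/- Let ν₀ be a finitely supported probability measure on ℝ. Then the function Φ_{ν₀} is monotone increasing on (0, ∞), and for every a > 1 one has Φ_{ν₀}(a)/log₂ a ≥ Φ_{ν₀}(a²)/log₂(a²), i.e. Φ_{ν₀}(a²) ≤ 2·Φ_{ν₀}(a). -/
open MeasureTheory ProbabilityTheory

/-- The law of `t·ξ₀` where `ξ₀` has the finitely supported law `ν` on `ℝ`. -/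
noncomputable def discLaw (ν : ℝ →₀ ℝ) (t : ℝ) : MeasureTheory.Measure ℝ :=
  ∑ q ∈ ν.support, ENNReal.ofReal (ν q) • MeasureTheory.Measure.dirac (t * q)

/-- The differential entropy `H(t·ξ₀ + G)` where `G` is a standard Gaussian independent
of `ξ₀ ~ ν`. -/
noncomputable def smoothEnt (ν : ℝ →₀ ℝ) (t : ℝ) : ℝ :=
  diffEnt (mconv (discLaw ν t) (ProbabilityTheory.gaussianReal 0 1))

/-- `Φ_ν(a) = sup_{t>0} { H(t·a·ξ₀ + G) − H(t·ξ₀ + G) }`. -/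
noncomputable def Phi (ν : ℝ →₀ ℝ) (a : ℝ) : ℝ :=
  sSup {r : ℝ | ∃ t : ℝ, 0 < t ∧ r = smoothEnt ν (t * a) - smoothEnt ν t}

/-- `ν` is a finitely supported probability measure on `ℝ`. -/
def IsProbFinsuppR (ν : ℝ →₀ ℝ) : Prop := (∀ q, 0 ≤ ν q) ∧ (∑ q ∈ ν.support, ν q) = 1

namespace S12

open Real

/-! ### The Gaussian density and Gaussian mixtures -/

/-- Centered Gaussian pdf with variance `v`. -/
noncomputable def gpdf (v x : ℝ) : ℝ := (Real.sqrt (2 * π * v))⁻¹ * Real.exp (-x ^ 2 / (2 * v))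

/-- Density of `t·ξ₀ + √v·G`. -/
noncomputable def mix (ν : ℝ →₀ ℝ) (t v x : ℝ) : ℝ :=
  ∑ q ∈ ν.support, ν q * gpdf v (x - t * q)

/-- Differential entropy (base 2) of a density. -/
noncomputable def ent (f : ℝ → ℝ) : ℝ := -∫ x, f x * Real.logb 2 (f x)

/-- Mutual information `I(ξ₀; tξ₀ + √v G) = Σ_q ν q · KL(gpdf v (· - tq) ‖ mix ν t v)`. -/
noncomputable def rel (ν : ℝ →₀ ℝ) (t v : ℝ) : ℝ :=
  ∑ q ∈ ν.support, ν q *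
    ∫ x, gpdf v (x - t * q) * Real.logb 2 (gpdf v (x - t * q) / mix ν t v x)

/-- The (discrete) entropy bound constant. -/
noncomputable def Kc (ν : ℝ →₀ ℝ) : ℝ := ∑ q ∈ ν.support, ν q * Real.logb 2 (ν q)⁻¹

variable {ν : ℝ →₀ ℝ} {t v a b c : ℝ}

lemma sqrt_two_pi_pos (hv : 0 < v) : 0 < Real.sqrt (2 * π * v) :=
  Real.sqrt_pos.mpr (by positivity)

lemma gpdf_pos (hv : 0 < v) (x : ℝ) : 0 < gpdf v x :=
  mul_pos (inv_pos.mpr (sqrt_two_pi_pos hv)) (Real.exp_pos _)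

lemma gpdf_nonneg (hv : 0 < v) (x : ℝ) : 0 ≤ gpdf v x := (gpdf_pos hv x).le

lemma gpdf_le (hv : 0 < v) (x : ℝ) : gpdf v x ≤ (Real.sqrt (2 * π * v))⁻¹ := by
  have h1 : Real.exp (-x ^ 2 / (2 * v)) ≤ 1 := by
    rw [Real.exp_le_one_iff, neg_div, neg_nonpos]
    positivity
  have h2 : (0:ℝ) ≤ (Real.sqrt (2 * π * v))⁻¹ := by positivity
  calc gpdf v x ≤ (Real.sqrt (2 * π * v))⁻¹ * 1 := mul_le_mul_of_nonneg_left h1 h2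
  _ = _ := mul_one _

lemma continuous_gpdf : Continuous (gpdf v) := by
  unfold gpdf
  fun_prop

lemma gpdf_eq_gaussianPDFReal (hv : 0 < v) :
    gpdf v = ProbabilityTheory.gaussianPDFReal 0 ⟨v, hv.le⟩ := by
  funext x
  simp [gpdf, ProbabilityTheory.gaussianPDFReal, sub_zero]
  rfl

lemma integrable_gpdf (hv : 0 < v) : Integrable (gpdf v) := by
  rw [gpdf_eq_gaussianPDFReal hv]
  exact ProbabilityTheory.integrable_gaussianPDFReal 0 _

lemma integral_gpdf (hv : 0 < v) : ∫ x, gpdf v x = 1 := by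
  rw [gpdf_eq_gaussianPDFReal hv]
  exact ProbabilityTheory.integral_gaussianPDFReal_eq_one 0
    (by intro h; exact hv.ne' (congrArg Subtype.val h))

lemma log_gpdf (hv : 0 < v) (x : ℝ) :
    Real.log (gpdf v x) = -Real.log (Real.sqrt (2 * π * v)) - x ^ 2 / (2 * v) := by
  unfold gpdf
  rw [Real.log_mul (by positivity) (Real.exp_ne_zero _), Real.log_inv, Real.log_exp]
  ring

lemma abs_log_gpdf_le (x : ℝ) (hv : 0 < v) :
    |Real.log (gpdf v x)| ≤ |Real.log (Real.sqrt (2 * π * v))| + x ^ 2 / (2 * v) := by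
  rw [log_gpdf hv]
  have h1 : (0:ℝ) ≤ x ^ 2 / (2 * v) := by positivity
  rw [abs_le]
  have hA := le_abs_self (Real.log (Real.sqrt (2 * π * v)))
  have hB := neg_abs_le (Real.log (Real.sqrt (2 * π * v)))
  constructor <;> linarith

lemma integrable_sq_mul_exp {b : ℝ} (hb : 0 < b) :
    Integrable (fun y : ℝ => y ^ 2 * Real.exp (-b * y ^ 2)) := by
  have hdom : Integrable (fun y : ℝ => (2 / b) * Real.exp (-(b / 2) * y ^ 2)) :=
    (integrable_exp_neg_mul_sq (by positivity)).const_mul _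
  apply hdom.mono' (Continuous.aestronglyMeasurable (by continuity))
  filter_upwards with y
  have h1 : y ^ 2 ≤ (2 / b) * Real.exp ((b / 2) * y ^ 2) := by
    have h := Real.add_one_le_exp ((b / 2) * y ^ 2)
    have hb2 : (0:ℝ) < b / 2 := by positivity
    rw [div_mul_eq_mul_div, le_div_iff₀ hb]
    nlinarith
  have : y ^ 2 * Real.exp (-b * y ^ 2) ≤ (2 / b) * Real.exp ((b / 2) * y ^ 2) * Real.exp (-b * y ^ 2) :=
    mul_le_mul_of_nonneg_right h1 (Real.exp_pos _).le
  calc ‖y ^ 2 * Real.exp (-b * y ^ 2)‖ = y ^ 2 * Real.exp (-b * y ^ 2) := by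
        rw [Real.norm_eq_abs, abs_of_nonneg (by positivity)]
  _ ≤ (2 / b) * Real.exp ((b / 2) * y ^ 2) * Real.exp (-b * y ^ 2) := this
  _ = (2 / b) * Real.exp (-(b / 2) * y ^ 2) := by
        rw [mul_assoc, ← Real.exp_add]
        ring_nf


lemma integrable_id_mul_exp {b : ℝ} (hb : 0 < b) :
    Integrable (fun y : ℝ => y * Real.exp (-b * y ^ 2)) := by
  have hdom : Integrable (fun y : ℝ =>
      Real.exp (-b * y ^ 2) + y ^ 2 * Real.exp (-b * y ^ 2)) :=
    (integrable_exp_neg_mul_sq hb).add (integrable_sq_mul_exp hb)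
  apply hdom.mono' (Continuous.aestronglyMeasurable (by continuity))
  filter_upwards with y
  rw [Real.norm_eq_abs, abs_mul, abs_of_nonneg (Real.exp_pos _).le]
  have h1 : |y| ≤ 1 + y ^ 2 := by nlinarith [abs_nonneg y, sq_abs y]
  nlinarith [Real.exp_pos (-b * y ^ 2), abs_nonneg y]

lemma exp_form (v y : ℝ) : Real.exp (-y ^ 2 / (2 * v)) = Real.exp (-(2 * v)⁻¹ * y ^ 2) := by
  congr 1
  rw [div_eq_mul_inv]
  ring

lemma integrable_gpdf_mul_sq (hv : 0 < v) (m m' : ℝ) :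
    Integrable (fun x => gpdf v (x - m) * (x - m') ^ 2) := by
  have base : Integrable (fun y : ℝ => gpdf v y * (y + (m - m')) ^ 2) := by
    have hb : (0:ℝ) < (2 * v)⁻¹ := by positivity
    have h0 := integrable_exp_neg_mul_sq hb
    have h1 := integrable_id_mul_exp hb
    have h2 := integrable_sq_mul_exp hb
    have : Integrable (fun y : ℝ =>
        (Real.sqrt (2 * π * v))⁻¹ * ((y ^ 2 * Real.exp (-(2 * v)⁻¹ * y ^ 2))
          + (2 * (m - m')) * (y * Real.exp (-(2 * v)⁻¹ * y ^ 2))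
          + ((m - m') ^ 2) * (Real.exp (-(2 * v)⁻¹ * y ^ 2)))) :=
      (Integrable.add (h2.add (h1.const_mul _)) (h0.const_mul _)).const_mul _
    apply this.congr
    filter_upwards with y
    unfold gpdf
    rw [exp_form]
    ring
  have := base.comp_sub_right m
  apply this.congr
  filter_upwards with x
  ring_nf

lemma integrable_gpdf_comp (hv : 0 < v) (m : ℝ) : Integrable (fun x => gpdf v (x - m)) :=
  (integrable_gpdf hv).comp_sub_right m

lemma integral_gpdf_comp (hv : 0 < v) (m : ℝ) : ∫ x, gpdf v (x - m) = 1 := by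
  rw [integral_sub_right_eq_self (gpdf v) m]
  exact integral_gpdf hv

/-- The key scaling property of the Gaussian pdf. -/
lemma gpdf_scale (hc : 0 < c) (hv : 0 < v) (x : ℝ) :
    gpdf (c ^ 2 * v) x = c⁻¹ * gpdf v (x * c⁻¹) := by
  unfold gpdf
  have hs : Real.sqrt (2 * π * (c ^ 2 * v)) = c * Real.sqrt (2 * π * v) := by
    rw [show 2 * π * (c ^ 2 * v) = c ^ 2 * (2 * π * v) by ring, Real.sqrt_mul (by positivity),
      Real.sqrt_sq hc.le]
  have h2 : -(x * c⁻¹) ^ 2 / (2 * v) = -x ^ 2 / (2 * (c ^ 2 * v)) := by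
    rw [neg_div, neg_div, neg_inj, mul_pow, div_eq_div_iff (by positivity) (by positivity)]
    field_simp
  rw [hs, h2, mul_inv]
  ring

/-- Gaussian convolution identity. -/
lemma gpdf_conv (ha : 0 < a) (hb : 0 < b) (z : ℝ) :
    ∫ y, gpdf b (z - y) * gpdf a y = gpdf (a + b) z := by
  have ha' : a ≠ 0 := ha.ne'
  have hb' : b ≠ 0 := hb.ne'
  have hab : a + b ≠ 0 := by positivity
  have hw : 0 < a * b / (a + b) := by positivity
  have hpt : ∀ y : ℝ, gpdf b (z - y) * gpdf a y
      = gpdf (a + b) z * gpdf (a * b / (a + b)) (y - a * z / (a + b)) := by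
    intro y
    unfold gpdf
    have hexp : Real.exp (-(z - y) ^ 2 / (2 * b)) * Real.exp (-y ^ 2 / (2 * a))
        = Real.exp (-z ^ 2 / (2 * (a + b)))
          * Real.exp (-(y - a * z / (a + b)) ^ 2 / (2 * (a * b / (a + b)))) := by
      rw [← Real.exp_add, ← Real.exp_add]
      congr 1
      field_simp
      ring
    have hpre : (Real.sqrt (2 * π * b))⁻¹ * (Real.sqrt (2 * π * a))⁻¹
        = (Real.sqrt (2 * π * (a + b)))⁻¹ * (Real.sqrt (2 * π * (a * b / (a + b))))⁻¹ := by
      rw [← mul_inv, ← mul_inv, ← Real.sqrt_mul (by positivity), ← Real.sqrt_mul (by positivity)]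
      congr 2
      field_simp
    calc (Real.sqrt (2 * π * b))⁻¹ * Real.exp (-(z - y) ^ 2 / (2 * b))
          * ((Real.sqrt (2 * π * a))⁻¹ * Real.exp (-y ^ 2 / (2 * a)))
        = ((Real.sqrt (2 * π * b))⁻¹ * (Real.sqrt (2 * π * a))⁻¹)
          * (Real.exp (-(z - y) ^ 2 / (2 * b)) * Real.exp (-y ^ 2 / (2 * a))) := by ring
    _ = ((Real.sqrt (2 * π * (a + b)))⁻¹ * (Real.sqrt (2 * π * (a * b / (a + b))))⁻¹)
          * (Real.exp (-z ^ 2 / (2 * (a + b)))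
            * Real.exp (-(y - a * z / (a + b)) ^ 2 / (2 * (a * b / (a + b))))) := by
        rw [hpre, hexp]
    _ = _ := by ring
  calc ∫ y, gpdf b (z - y) * gpdf a y
      = ∫ y, gpdf (a + b) z * gpdf (a * b / (a + b)) (y - a * z / (a + b)) := by
        apply integral_congr_ae
        filter_upwards with y using hpt y
  _ = gpdf (a + b) z * ∫ y, gpdf (a * b / (a + b)) (y - a * z / (a + b)) :=
        integral_const_mul _ _
  _ = gpdf (a + b) z := by rw [integral_gpdf_comp hw]; ring

/-! ### Basic properties of the mixture density -/

lemma support_nonempty (hν : IsProbFinsuppR ν) : ν.support.Nonempty := by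
  rcases Finset.eq_empty_or_nonempty ν.support with h | h
  · exfalso
    have := hν.2
    rw [h, Finset.sum_empty] at this
    norm_num at this
  · exact h

lemma coeff_pos (hν : IsProbFinsuppR ν) {q : ℝ} (hq : q ∈ ν.support) : 0 < ν q :=
  lt_of_le_of_ne (hν.1 q) (Ne.symm (Finsupp.mem_support_iff.mp hq))

lemma mix_nonneg (hν : IsProbFinsuppR ν) (hv : 0 < v) (x : ℝ) : 0 ≤ mix ν t v x :=
  Finset.sum_nonneg fun q _ => mul_nonneg (hν.1 q) (gpdf_nonneg hv _)

lemma mix_pos (hν : IsProbFinsuppR ν) (hv : 0 < v) (x : ℝ) : 0 < mix ν t v x := by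
  obtain ⟨q, hq⟩ := support_nonempty hν
  exact Finset.sum_pos' (fun r _ => mul_nonneg (hν.1 r) (gpdf_nonneg hv _))
    ⟨q, hq, mul_pos (coeff_pos hν hq) (gpdf_pos hv _)⟩

lemma mix_le (hν : IsProbFinsuppR ν) (hv : 0 < v) (x : ℝ) :
    mix ν t v x ≤ (Real.sqrt (2 * π * v))⁻¹ := by
  calc mix ν t v x ≤ ∑ q ∈ ν.support, ν q * (Real.sqrt (2 * π * v))⁻¹ :=
        Finset.sum_le_sum fun q _ => mul_le_mul_of_nonneg_left (gpdf_le hv _) (hν.1 q)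
  _ = (Real.sqrt (2 * π * v))⁻¹ := by rw [← Finset.sum_mul, hν.2, one_mul]

lemma term_le_mix (hν : IsProbFinsuppR ν) (hv : 0 < v) {q : ℝ} (hq : q ∈ ν.support) (x : ℝ) :
    ν q * gpdf v (x - t * q) ≤ mix ν t v x := by
  unfold mix
  exact Finset.single_le_sum (f := fun r => ν r * gpdf v (x - t * r))
    (fun r _ => mul_nonneg (hν.1 r) (gpdf_nonneg hv _)) hq

lemma continuous_mix : Continuous (mix ν t v) := by
  apply continuous_finset_sum
  intro q _
  exact continuous_const.mul (continuous_gpdf.comp (by continuity))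

lemma integrable_mix (hv : 0 < v) : Integrable (mix ν t v) :=
  integrable_finset_sum _ fun q _ => (integrable_gpdf_comp hv (t * q)).const_mul _

lemma integral_mix (hν : IsProbFinsuppR ν) (hv : 0 < v) : ∫ x, mix ν t v x = 1 := by
  unfold mix
  rw [integral_finset_sum _ fun q _ => (integrable_gpdf_comp hv (t * q)).const_mul _]
  have : ∀ q ∈ ν.support, ∫ x, ν q * gpdf v (x - t * q) = ν q := by
    intro q _
    rw [integral_const_mul, integral_gpdf_comp hv, mul_one]
  rw [Finset.sum_congr rfl this, hν.2]

lemma abs_log_mix_le (hν : IsProbFinsuppR ν) (hv : 0 < v) (t : ℝ) :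
    ∃ C q₀, q₀ ∈ ν.support ∧ ∀ x, |Real.log (mix ν t v x)| ≤ C + (x - t * q₀) ^ 2 / (2 * v) := by
  obtain ⟨q₀, hq₀⟩ := support_nonempty hν
  refine ⟨2 * |Real.log (Real.sqrt (2 * π * v))| + |Real.log (ν q₀)|, q₀, hq₀, fun x => ?_⟩
  have hpos := mix_pos hν hv (t := t) x
  have hquad : (0:ℝ) ≤ (x - t * q₀) ^ 2 / (2 * v) := by positivity
  rw [abs_le]
  constructor
  · -- lower bound : mix ≥ ν q₀ * gpdf v (x - t q₀)
    have h1 : Real.log (ν q₀ * gpdf v (x - t * q₀)) ≤ Real.log (mix ν t v x) :=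
      Real.log_le_log (mul_pos (coeff_pos hν hq₀) (gpdf_pos hv _)) (term_le_mix hν hv hq₀ x)
    rw [Real.log_mul (coeff_pos hν hq₀).ne' (gpdf_pos hv _).ne', log_gpdf hv] at h1
    have hA := neg_abs_le (Real.log (ν q₀))
    have hB := neg_abs_le (Real.log (Real.sqrt (2 * π * v)))
    have hC := le_abs_self (Real.log (Real.sqrt (2 * π * v)))
    linarith
  · have h2 : Real.log (mix ν t v x) ≤ Real.log (Real.sqrt (2 * π * v))⁻¹ :=
      Real.log_le_log hpos (mix_le hν hv x)
    rw [Real.log_inv] at h2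
    have hB := neg_abs_le (Real.log (Real.sqrt (2 * π * v)))
    have hD : (0:ℝ) ≤ |Real.log (ν q₀)| := abs_nonneg _
    have hE : (0:ℝ) ≤ |Real.log (Real.sqrt (2 * π * v))| := abs_nonneg _
    linarith

lemma mix_scale (hc : 0 < c) (hv : 0 < v) (t x : ℝ) :
    mix ν (c * t) (c ^ 2 * v) x = c⁻¹ * mix ν t v (x * c⁻¹) := by
  unfold mix
  rw [Finset.mul_sum]
  apply Finset.sum_congr rfl
  intro q _
  rw [gpdf_scale hc hv]
  have harg : (x - c * t * q) * c⁻¹ = x * c⁻¹ - t * q := by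
    field_simp
  rw [harg]
  ring

/-! ### Integrability of entropy integrands -/

lemma integrable_gpdf_mul_quad (hv : 0 < v) (m : ℝ) (C : ℝ) {v' : ℝ} (hv' : 0 < v') (m' : ℝ) :
    Integrable (fun x => gpdf v (x - m) * (C + (x - m') ^ 2 / (2 * v'))) := by
  have h : Integrable (fun x => C * gpdf v (x - m)
      + (2 * v')⁻¹ * (gpdf v (x - m) * (x - m') ^ 2)) :=
    ((integrable_gpdf_comp hv m).const_mul C).add
      ((integrable_gpdf_mul_sq hv m m').const_mul _)
  apply h.congr
  filter_upwards with x
  field_simp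

lemma log_two_pos : (0:ℝ) < Real.log 2 := Real.log_pos one_lt_two

lemma integrable_gpdf_mul_logb_gpdf (hv : 0 < v) (m : ℝ) :
    Integrable (fun x => gpdf v (x - m) * Real.logb 2 (gpdf v (x - m))) := by
  have h := (integrable_gpdf_mul_quad hv m (Real.log (Real.sqrt (2 * π * v))) hv m).const_mul
    (-(Real.log 2)⁻¹)
  apply h.congr
  filter_upwards with x
  rw [Real.logb, log_gpdf hv]
  field_simp
  ring

lemma continuous_logb_mix (hν : IsProbFinsuppR ν) (hv : 0 < v) :
    Continuous (fun x => Real.logb 2 (mix ν t v x)) := by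
  simp only [Real.logb]
  exact (continuous_mix.log fun x => (mix_pos hν hv x).ne').div_const _

lemma integrable_gpdf_mul_logb_mix (hν : IsProbFinsuppR ν) (hv : 0 < v) (m : ℝ) :
    Integrable (fun x => gpdf v (x - m) * Real.logb 2 (mix ν t v x)) := by
  obtain ⟨C, q₀, hq₀, hC⟩ := abs_log_mix_le hν hv t
  have hdom : Integrable (fun x =>
      (Real.log 2)⁻¹ * (gpdf v (x - m) * (C + (x - t * q₀) ^ 2 / (2 * v)))) :=
    (integrable_gpdf_mul_quad hv m C hv _).const_mul _
  apply hdom.mono'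
  · exact ((continuous_gpdf.comp (by continuity)).mul
      (continuous_logb_mix hν hv)).aestronglyMeasurable
  filter_upwards with x
  have hg := gpdf_nonneg hv (x - m)
  have hl2 := log_two_pos
  rw [Real.norm_eq_abs, abs_mul, abs_of_nonneg hg, Real.logb, abs_div,
    abs_of_nonneg hl2.le]
  have h1 : gpdf v (x - m) * |Real.log (mix ν t v x)|
      ≤ gpdf v (x - m) * (C + (x - t * q₀) ^ 2 / (2 * v)) :=
    mul_le_mul_of_nonneg_left (hC x) hg
  calc gpdf v (x - m) * (|Real.log (mix ν t v x)| / Real.log 2)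
      = gpdf v (x - m) * |Real.log (mix ν t v x)| * (Real.log 2)⁻¹ := by ring
  _ ≤ gpdf v (x - m) * (C + (x - t * q₀) ^ 2 / (2 * v)) * (Real.log 2)⁻¹ :=
      mul_le_mul_of_nonneg_right h1 (inv_nonneg.mpr hl2.le)
  _ = (Real.log 2)⁻¹ * (gpdf v (x - m) * (C + (x - t * q₀) ^ 2 / (2 * v))) := by ring

lemma integrable_mix_mul_quad (hν : IsProbFinsuppR ν) (hv : 0 < v) (C m' : ℝ) :
    Integrable (fun x => mix ν t v x * (C + (x - m') ^ 2 / (2 * v))) := by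
  have h : Integrable (fun x => ∑ q ∈ ν.support,
      ν q * (gpdf v (x - t * q) * (C + (x - m') ^ 2 / (2 * v)))) :=
    integrable_finset_sum _ fun q _ => (integrable_gpdf_mul_quad hv (t * q) C hv m').const_mul _
  apply h.congr
  filter_upwards with x
  unfold mix
  rw [Finset.sum_mul]
  apply Finset.sum_congr rfl
  intros
  ring

lemma integrable_mix_mul_logb_mix (hν : IsProbFinsuppR ν) (hv : 0 < v) :
    Integrable (fun x => mix ν t v x * Real.logb 2 (mix ν t v x)) := by
  obtain ⟨C, q₀, hq₀, hC⟩ := abs_log_mix_le hν hv t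
  have hdom : Integrable (fun x =>
      (Real.log 2)⁻¹ * (mix ν t v x * (C + (x - t * q₀) ^ 2 / (2 * v)))) :=
    (integrable_mix_mul_quad hν hv C _).const_mul _
  apply hdom.mono'
  · exact (continuous_mix.mul (continuous_logb_mix hν hv)).aestronglyMeasurable
  filter_upwards with x
  have hg := mix_nonneg hν hv (t := t) x
  have hl2 := log_two_pos
  rw [Real.norm_eq_abs, abs_mul, abs_of_nonneg hg, Real.logb, abs_div,
    abs_of_nonneg hl2.le]
  have h1 : mix ν t v x * |Real.log (mix ν t v x)|
      ≤ mix ν t v x * (C + (x - t * q₀) ^ 2 / (2 * v)) :=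
    mul_le_mul_of_nonneg_left (hC x) hg
  calc mix ν t v x * (|Real.log (mix ν t v x)| / Real.log 2)
      = mix ν t v x * |Real.log (mix ν t v x)| * (Real.log 2)⁻¹ := by ring
  _ ≤ mix ν t v x * (C + (x - t * q₀) ^ 2 / (2 * v)) * (Real.log 2)⁻¹ :=
      mul_le_mul_of_nonneg_right h1 (inv_nonneg.mpr hl2.le)
  _ = _ := by ring

lemma integrable_gpdf_mul_logb_ratio (hν : IsProbFinsuppR ν) (hv : 0 < v) (m : ℝ) :
    Integrable (fun x => gpdf v (x - m) * Real.logb 2 (gpdf v (x - m) / mix ν t v x)) := by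
  have h := (integrable_gpdf_mul_logb_gpdf hv m).sub (integrable_gpdf_mul_logb_mix hν hv (t := t) m)
  apply h.congr
  filter_upwards with x
  simp only [Pi.sub_apply]
  rw [Real.logb_div (gpdf_pos hv _).ne' (mix_pos hν hv x).ne']
  ring

/-! ### The entropy decomposition `ent (mix) = ent (gpdf) + rel` -/

lemma ent_mix_eq (hν : IsProbFinsuppR ν) (hv : 0 < v) (t : ℝ) :
    ent (mix ν t v) = ent (gpdf v) + rel ν t v := by
  have key : ∀ q ∈ ν.support,
      ∫ x, gpdf v (x - t * q) * Real.logb 2 (gpdf v (x - t * q) / mix ν t v x)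
      = (∫ x, gpdf v x * Real.logb 2 (gpdf v x))
        - ∫ x, gpdf v (x - t * q) * Real.logb 2 (mix ν t v x) := by
    intro q _
    have h1 : ∫ x, gpdf v (x - t * q) * Real.logb 2 (gpdf v (x - t * q) / mix ν t v x)
        = ∫ x, (gpdf v (x - t * q) * Real.logb 2 (gpdf v (x - t * q))
            - gpdf v (x - t * q) * Real.logb 2 (mix ν t v x)) := by
      apply integral_congr_ae
      filter_upwards with x
      rw [Real.logb_div (gpdf_pos hv _).ne' (mix_pos hν hv x).ne']
      ring
    rw [h1, integral_sub (integrable_gpdf_mul_logb_gpdf hv _)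
      (integrable_gpdf_mul_logb_mix hν hv _),
      integral_sub_right_eq_self (fun y => gpdf v y * Real.logb 2 (gpdf v y)) (t * q)]
  have hsum : ∑ q ∈ ν.support, ν q * ∫ x, gpdf v (x - t * q) * Real.logb 2 (mix ν t v x)
      = ∫ x, mix ν t v x * Real.logb 2 (mix ν t v x) := by
    have h1 : ∀ q ∈ ν.support,
        ν q * ∫ x, gpdf v (x - t * q) * Real.logb 2 (mix ν t v x)
        = ∫ x, ν q * (gpdf v (x - t * q) * Real.logb 2 (mix ν t v x)) :=
      fun q _ => (integral_const_mul _ _).symm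
    rw [Finset.sum_congr rfl h1,
      ← integral_finset_sum _ fun q _ => (integrable_gpdf_mul_logb_mix hν hv _).const_mul _]
    apply integral_congr_ae
    filter_upwards with x
    calc ∑ q ∈ ν.support, ν q * (gpdf v (x - t * q) * Real.logb 2 (mix ν t v x))
        = (∑ q ∈ ν.support, ν q * gpdf v (x - t * q)) * Real.logb 2 (mix ν t v x) := by
          rw [Finset.sum_mul]
          exact Finset.sum_congr rfl fun q _ => by ring
    _ = mix ν t v x * Real.logb 2 (mix ν t v x) := rfl
  have hrel : rel ν t v = (∫ x, gpdf v x * Real.logb 2 (gpdf v x))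
      - ∫ x, mix ν t v x * Real.logb 2 (mix ν t v x) := by
    unfold rel
    rw [Finset.sum_congr rfl fun q hq => by rw [key q hq]]
    rw [show ∑ q ∈ ν.support, ν q * ((∫ x, gpdf v x * Real.logb 2 (gpdf v x))
        - ∫ x, gpdf v (x - t * q) * Real.logb 2 (mix ν t v x))
      = (∑ q ∈ ν.support, ν q) * (∫ x, gpdf v x * Real.logb 2 (gpdf v x))
        - ∑ q ∈ ν.support, ν q * ∫ x, gpdf v (x - t * q) * Real.logb 2 (mix ν t v x) by
        rw [Finset.sum_mul, ← Finset.sum_sub_distrib]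
        apply Finset.sum_congr rfl
        intros
        ring]
    rw [hν.2, one_mul, hsum]
  unfold ent
  linarith [hrel]

/-! ### Bounds on `rel` -/

lemma mul_log_ratio_ge {u w : ℝ} (hu : 0 < u) (hw : 0 < w) : u - w ≤ u * Real.log (u / w) := by
  have h := Real.log_le_sub_one_of_pos (show 0 < w / u by positivity)
  rw [Real.log_div hw.ne' hu.ne'] at h
  rw [Real.log_div hu.ne' hw.ne']
  have huw : u * (w / u) = w := by field_simp
  nlinarith

lemma rel_nonneg (hν : IsProbFinsuppR ν) (hv : 0 < v) (t : ℝ) : 0 ≤ rel ν t v := by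
  apply Finset.sum_nonneg
  intro q _
  apply mul_nonneg (hν.1 q)
  have hl2 := log_two_pos
  have hint1 : Integrable (fun x => (gpdf v (x - t * q) - mix ν t v x) / Real.log 2) :=
    ((integrable_gpdf_comp hv _).sub (integrable_mix hv)).div_const _
  have hpt : (fun x => (gpdf v (x - t * q) - mix ν t v x) / Real.log 2)
      ≤ fun x => gpdf v (x - t * q) * Real.logb 2 (gpdf v (x - t * q) / mix ν t v x) := by
    intro x
    have hu := gpdf_pos hv (x - t * q)
    have hm := mix_pos hν hv (t := t) x
    have h := mul_log_ratio_ge hu hm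
    simp only [Real.logb]
    calc (gpdf v (x - t * q) - mix ν t v x) / Real.log 2
        ≤ gpdf v (x - t * q) * Real.log (gpdf v (x - t * q) / mix ν t v x) / Real.log 2 :=
          div_le_div_of_nonneg_right h hl2.le
    _ = _ := by ring
  have hmono := integral_mono hint1 (integrable_gpdf_mul_logb_ratio hν hv (t := t) (t * q)) hpt
  have hz : ∫ x, (gpdf v (x - t * q) - mix ν t v x) / Real.log 2 = 0 := by
    rw [integral_div, integral_sub (integrable_gpdf_comp hv _) (integrable_mix hv),
      integral_gpdf_comp hv, integral_mix hν hv]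
    simp
  rw [hz] at hmono
  exact hmono

lemma rel_le_Kc (hν : IsProbFinsuppR ν) (hv : 0 < v) (t : ℝ) : rel ν t v ≤ Kc ν := by
  apply Finset.sum_le_sum
  intro q hq
  apply mul_le_mul_of_nonneg_left ?_ (hν.1 q)
  have hint2 : Integrable (fun x => gpdf v (x - t * q) * Real.logb 2 (ν q)⁻¹) :=
    (integrable_gpdf_comp hv _).mul_const _
  have hmono := integral_mono (integrable_gpdf_mul_logb_ratio hν hv (t := t) (t * q)) hint2 ?_
  · rw [integral_mul_const, integral_gpdf_comp hv, one_mul] at hmono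
    exact hmono
  · intro x
    have hu := gpdf_pos hv (x - t * q)
    have hm := mix_pos hν hv (t := t) x
    have hq' := coeff_pos hν hq
    have hr : gpdf v (x - t * q) / mix ν t v x ≤ (ν q)⁻¹ := by
      rw [div_le_iff₀ hm]
      have hterm := term_le_mix hν hv (t := t) hq x
      calc gpdf v (x - t * q) = (ν q)⁻¹ * (ν q * gpdf v (x - t * q)) := by field_simp
      _ ≤ (ν q)⁻¹ * mix ν t v x := by
          exact mul_le_mul_of_nonneg_left hterm (inv_nonneg.mpr hq'.le)
    have hlog := Real.logb_le_logb_of_le one_lt_two (div_pos hu hm) hr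
    exact mul_le_mul_of_nonneg_left hlog hu.le

/-! ### Contraction of `rel` under Gaussian smoothing (data processing) -/

lemma integrable_gpdf_mul_sq' (hv : 0 < v) (m' : ℝ) :
    Integrable (fun y => gpdf v y * (y - m') ^ 2) := by
  apply (integrable_gpdf_mul_sq hv 0 m').congr
  filter_upwards with y
  rw [sub_zero]

lemma integrable_gpdf_mul_quad2 (ha : 0 < a) (hb : 0 < b) (D e₁ e₂ : ℝ) :
    Integrable (fun y => gpdf a y * (D + (y - e₁) ^ 2 / (2 * b) + (y - e₂) ^ 2 / (2 * b))) := by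
  have h1 : Integrable (fun y => D * gpdf a y + (2 * b)⁻¹ * (gpdf a y * (y - e₁) ^ 2)
      + (2 * b)⁻¹ * (gpdf a y * (y - e₂) ^ 2)) :=
    (((integrable_gpdf ha).const_mul D).add
      ((integrable_gpdf_mul_sq' ha e₁).const_mul _)).add
      ((integrable_gpdf_mul_sq' ha e₂).const_mul _)
  apply h1.congr
  filter_upwards with y
  field_simp

lemma integrable_gpdf_mul_gpdf (ha : 0 < a) (hb : 0 < b) (z : ℝ) :
    Integrable (fun y => gpdf b (z - y) * gpdf a y) := by
  apply ((integrable_gpdf ha).const_mul (Real.sqrt (2 * π * b))⁻¹).mono'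
  · exact ((continuous_gpdf.comp (continuous_const.sub continuous_id)).mul
      continuous_gpdf).aestronglyMeasurable
  filter_upwards with y
  rw [Real.norm_eq_abs, abs_of_nonneg (mul_nonneg (gpdf_nonneg hb _) (gpdf_nonneg ha _))]
  exact mul_le_mul_of_nonneg_right (gpdf_le hb _) (gpdf_nonneg ha _)

lemma mix_conv (hν : IsProbFinsuppR ν) (ha : 0 < a) (hb : 0 < b) (t x : ℝ) :
    ∫ y, mix ν t b (x - y) * gpdf a y = mix ν t (a + b) x := by
  have hpt : ∀ y : ℝ, mix ν t b (x - y) * gpdf a y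
      = ∑ q ∈ ν.support, ν q * (gpdf b ((x - t * q) - y) * gpdf a y) := by
    intro y
    rw [show mix ν t b (x - y) = ∑ q ∈ ν.support, ν q * gpdf b (x - y - t * q) from rfl,
      Finset.sum_mul]
    apply Finset.sum_congr rfl
    intro q _
    rw [show x - y - t * q = x - t * q - y from by ring]
    ring
  rw [integral_congr_ae (Filter.Eventually.of_forall hpt),
    integral_finset_sum _ fun q _ => (integrable_gpdf_mul_gpdf ha hb (x - t * q)).const_mul _,
    show mix ν t (a + b) x = ∑ q ∈ ν.support, ν q * gpdf (a + b) (x - t * q) from rfl]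
  apply Finset.sum_congr rfl
  intro q _
  rw [integral_const_mul, gpdf_conv ha hb]

lemma continuous_ratio (hν : IsProbFinsuppR ν) (hb : 0 < b) (m : ℝ) :
    Continuous (fun z => gpdf b (z - m) * Real.logb 2 (gpdf b (z - m) / mix ν t b z)) := by
  have h1 : Continuous fun z : ℝ => gpdf b (z - m) := continuous_gpdf.comp (by continuity)
  have h2 : Continuous fun z => gpdf b (z - m) / mix ν t b z :=
    h1.div continuous_mix fun z => (mix_pos hν hb z).ne'
  have h3 : Continuous fun z => Real.log (gpdf b (z - m) / mix ν t b z) :=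
    h2.log fun z => (div_pos (gpdf_pos hb _) (mix_pos hν hb z)).ne'
  simp only [Real.logb]
  exact h1.mul (h3.div_const _)

lemma rel_contract (hν : IsProbFinsuppR ν) (ha : 0 < a) (hb : 0 < b) (t : ℝ) :
    rel ν t (a + b) ≤ rel ν t b := by
  have hab : 0 < a + b := by positivity
  have hl2 := log_two_pos
  apply Finset.sum_le_sum
  intro q hq
  refine mul_le_mul_of_nonneg_left ?_ (hν.1 q)
  set m := t * q with hm
  set Ψ : ℝ → ℝ := fun z => gpdf b (z - m) * Real.logb 2 (gpdf b (z - m) / mix ν t b z)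
    with hΨdef
  have hiΨ : Integrable Ψ := integrable_gpdf_mul_logb_ratio hν hb (t := t) m
  obtain ⟨C, q₀, hq₀, hC⟩ := abs_log_mix_le hν hb t
  set D : ℝ := |Real.log (Real.sqrt (2 * π * b))| + C with hD
  have hQ : ∀ z : ℝ, |Real.log (gpdf b (z - m) / mix ν t b z)|
      ≤ D + (z - m) ^ 2 / (2 * b) + (z - t * q₀) ^ 2 / (2 * b) := by
    intro z
    rw [Real.log_div (gpdf_pos hb _).ne' (mix_pos hν hb _).ne']
    have h1 := abs_log_gpdf_le (v := b) (z - m) hb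
    have h2 := hC z
    calc |Real.log (gpdf b (z - m)) - Real.log (mix ν t b z)|
        ≤ |Real.log (gpdf b (z - m))| + |Real.log (mix ν t b z)| := abs_sub _ _
    _ ≤ D + (z - m) ^ 2 / (2 * b) + (z - t * q₀) ^ 2 / (2 * b) := by
        rw [hD]
        linarith
  have hΨbd : ∀ z : ℝ, |Ψ z| ≤ ((Real.sqrt (2 * π * b))⁻¹ / Real.log 2)
      * (D + (z - m) ^ 2 / (2 * b) + (z - t * q₀) ^ 2 / (2 * b)) := by
    intro z
    rw [hΨdef]
    simp only [Real.logb]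
    rw [abs_mul, abs_of_nonneg (gpdf_nonneg hb _), abs_div, abs_of_nonneg hl2.le]
    have hq1 : (0:ℝ) ≤ D + (z - m) ^ 2 / (2 * b) + (z - t * q₀) ^ 2 / (2 * b) :=
      le_trans (abs_nonneg _) (hQ z)
    calc gpdf b (z - m) * (|Real.log (gpdf b (z - m) / mix ν t b z)| / Real.log 2)
        ≤ (Real.sqrt (2 * π * b))⁻¹
          * ((D + (z - m) ^ 2 / (2 * b) + (z - t * q₀) ^ 2 / (2 * b)) / Real.log 2) := by
          apply mul_le_mul (gpdf_le hb _) _ (by positivity) (by positivity)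
          exact div_le_div_of_nonneg_right (hQ z) hl2.le
    _ = _ := by ring
  -- pointwise Jensen inequality
  have jensen : ∀ x : ℝ,
      gpdf (a + b) (x - m) * Real.logb 2 (gpdf (a + b) (x - m) / mix ν t (a + b) x)
      ≤ ∫ y, Ψ (x - y) * gpdf a y := by
    intro x
    have hApos : 0 < gpdf (a + b) (x - m) := gpdf_pos hab _
    have hBpos : 0 < mix ν t (a + b) x := mix_pos hν hab x
    set A := gpdf (a + b) (x - m) with hA
    set B := mix ν t (a + b) x with hB
    set W : ℝ → ℝ := fun y => gpdf b (x - y - m) * gpdf a y with hW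
    set Z : ℝ → ℝ := fun y => mix ν t b (x - y) * gpdf a y with hZ
    have hWpos : ∀ y, 0 < W y := fun y => mul_pos (gpdf_pos hb _) (gpdf_pos ha _)
    have hZpos : ∀ y, 0 < Z y := fun y => mul_pos (mix_pos hν hb _) (gpdf_pos ha _)
    have hiW : Integrable W := by
      apply (integrable_gpdf_mul_gpdf ha hb (x - m)).congr
      filter_upwards with y
      rw [hW]
      simp only
      rw [show x - m - y = x - y - m from by ring]
    have hiZ : Integrable Z := by
      apply ((integrable_gpdf ha).const_mul (Real.sqrt (2 * π * b))⁻¹).mono'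
      · exact ((continuous_mix.comp (continuous_const.sub continuous_id)).mul
          continuous_gpdf).aestronglyMeasurable
      filter_upwards with y
      rw [Real.norm_eq_abs, abs_of_nonneg (hZpos y).le, hZ]
      exact mul_le_mul_of_nonneg_right (mix_le hν hb _) (gpdf_nonneg ha _)
    have hintW : ∫ y, W y = A := by
      rw [hA, ← gpdf_conv ha hb (x - m)]
      apply integral_congr_ae
      filter_upwards with y
      rw [hW]
      simp only
      rw [show x - y - m = x - m - y from by ring]
    have hintZ : ∫ y, Z y = B := mix_conv hν ha hb t x
    have hpt : ∀ y : ℝ, W y * Real.logb 2 (A / B) + (W y - Z y * (A / B)) / Real.log 2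
        ≤ Ψ (x - y) * gpdf a y := by
      intro y
      have hcancel : gpdf b (x - y - m) / mix ν t b (x - y) = W y / Z y :=
        (mul_div_mul_right _ _ (gpdf_pos ha y).ne').symm
      have hr : Ψ (x - y) * gpdf a y = W y * Real.logb 2 (W y / Z y) := by
        rw [hΨdef]
        simp only
        rw [hcancel, hW, hZ]
        simp only
        ring
      rw [hr]
      have h1 : W y - (Z y * A / B) ≤ W y * Real.log (W y / (Z y * A / B)) :=
        mul_log_ratio_ge (hWpos y) (div_pos (mul_pos (hZpos y) hApos) hBpos)
      have h2 : W y / (Z y * A / B) = (W y / Z y) / (A / B) := by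
        have hZ0 := (hZpos y).ne'
        have hA0 := hApos.ne'
        have hB0 := hBpos.ne'
        field_simp
      have h3 : Real.log ((W y / Z y) / (A / B)) = Real.log (W y / Z y) - Real.log (A / B) :=
        Real.log_div (div_pos (hWpos y) (hZpos y)).ne' (div_pos hApos hBpos).ne'
      rw [h2, h3] at h1
      have h4 := mul_le_mul_of_nonneg_right h1 (inv_nonneg.mpr hl2.le)
      simp only [Real.logb, div_eq_mul_inv]
      ring_nf
      ring_nf at h4
      linarith
    have hg1 : Integrable (fun y => W y * Real.logb 2 (A / B)) := hiW.mul_const _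
    have hg2 : Integrable (fun y => (W y - Z y * (A / B)) / Real.log 2) := by
      apply Integrable.div_const
      apply (hiW.sub (hiZ.mul_const (A / B))).congr
      filter_upwards with y
      simp
    have hlow : Integrable (fun y => W y * Real.logb 2 (A / B)
        + (W y - Z y * (A / B)) / Real.log 2) := hg1.add hg2
    have hup : Integrable (fun y => Ψ (x - y) * gpdf a y) := by
      have hdom : Integrable (fun y => (gpdf a y * (D + (y - (x - m)) ^ 2 / (2 * b)
          + (y - (x - t * q₀)) ^ 2 / (2 * b))) * ((Real.sqrt (2 * π * b))⁻¹ / Real.log 2)) :=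
        (integrable_gpdf_mul_quad2 ha hb D _ _).mul_const _
      apply hdom.mono'
      · have hΨcont : Continuous Ψ := continuous_ratio hν hb m
        exact ((hΨcont.comp (continuous_const.sub continuous_id)).mul
          continuous_gpdf).aestronglyMeasurable
      filter_upwards with y
      rw [Real.norm_eq_abs, abs_mul, abs_of_nonneg (gpdf_nonneg ha _)]
      have h5 := hΨbd (x - y)
      calc |Ψ (x - y)| * gpdf a y
          ≤ ((Real.sqrt (2 * π * b))⁻¹ / Real.log 2)
            * (D + (x - y - m) ^ 2 / (2 * b) + (x - y - t * q₀) ^ 2 / (2 * b)) * gpdf a y :=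
            mul_le_mul_of_nonneg_right h5 (gpdf_nonneg ha _)
      _ = _ := by ring
    have hmono := integral_mono hlow hup hpt
    have hcalc : ∫ y, (W y * Real.logb 2 (A / B) + (W y - Z y * (A / B)) / Real.log 2)
        = A * Real.logb 2 (A / B) := by
      rw [integral_add hg1 hg2, integral_mul_const, integral_div,
        integral_sub hiW (hiZ.mul_const _), integral_mul_const, hintW, hintZ]
      field_simp
      ring
    rw [hcalc] at hmono
    exact hmono
  -- outer integration
  have hΨcont : Continuous Ψ := continuous_ratio hν hb m
  have hcont2 : Continuous (fun p : ℝ × ℝ => Ψ (p.1 - p.2) * gpdf a p.2) :=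
    (hΨcont.comp (continuous_fst.sub continuous_snd)).mul (continuous_gpdf.comp continuous_snd)
  have hΦ : Integrable (fun p : ℝ × ℝ => Ψ (p.1 - p.2) * gpdf a p.2)
      (volume.prod volume) := by
    rw [integrable_prod_iff' hcont2.aestronglyMeasurable]
    constructor
    · filter_upwards with y
      exact (hiΨ.comp_sub_right y).mul_const _
    · have hnorm : ∀ y : ℝ, (∫ x, ‖Ψ (x - y) * gpdf a y‖) = (∫ z, ‖Ψ z‖) * gpdf a y := by
        intro y
        have hpt2 : ∀ x : ℝ, ‖Ψ (x - y) * gpdf a y‖ = ‖Ψ (x - y)‖ * gpdf a y := by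
          intro x
          rw [norm_mul, Real.norm_eq_abs (gpdf a y), abs_of_nonneg (gpdf_nonneg ha y)]
        rw [integral_congr_ae (Filter.Eventually.of_forall hpt2), integral_mul_const,
          integral_sub_right_eq_self (fun z => ‖Ψ z‖) y]
      apply (((integrable_gpdf ha).const_mul (∫ z, ‖Ψ z‖))).congr
      filter_upwards with y
      exact (hnorm y).symm
  have houter : Integrable (fun x => ∫ y, Ψ (x - y) * gpdf a y) := hΦ.integral_prod_left
  have hmono2 := integral_mono (integrable_gpdf_mul_logb_ratio hν hab (t := t) m) houter jensen
  have hswap : ∫ x, ∫ y, Ψ (x - y) * gpdf a y = ∫ y, ∫ x, Ψ (x - y) * gpdf a y :=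
    integral_integral_swap hΦ
  have hinner : ∀ y : ℝ, ∫ x, Ψ (x - y) * gpdf a y = (∫ z, Ψ z) * gpdf a y := by
    intro y
    rw [integral_mul_const, integral_sub_right_eq_self Ψ y]
  have hfinal : ∫ x, ∫ y, Ψ (x - y) * gpdf a y = ∫ z, Ψ z := by
    rw [hswap, integral_congr_ae (Filter.Eventually.of_forall hinner), integral_const_mul,
      integral_gpdf ha, mul_one]
  rw [hfinal] at hmono2
  exact hmono2

/-! ### Entropy under scaling -/

lemma ent_scale (hc : 0 < c) (f : ℝ → ℝ)
    (hnn : ∀ x, 0 ≤ f x) (hint : Integrable f) (h1 : ∫ x, f x = 1)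
    (hflog : Integrable (fun x => f x * Real.logb 2 (f x))) :
    ent (fun x => c⁻¹ * f (x * c⁻¹)) = ent f + Real.logb 2 c := by
  have hc' : c ≠ 0 := hc.ne'
  unfold ent
  have hpt : ∀ x : ℝ, (c⁻¹ * f (x * c⁻¹)) * Real.logb 2 (c⁻¹ * f (x * c⁻¹))
      = c⁻¹ * ((fun y => f y * Real.logb 2 (f y)) (x * c⁻¹))
        - (c⁻¹ * Real.logb 2 c) * f (x * c⁻¹) := by
    intro x
    rcases (hnn (x * c⁻¹)).eq_or_lt with h0 | hpos
    · simp [← h0]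
    · simp only
      rw [Real.logb_mul (by positivity) hpos.ne', Real.logb_inv]
      ring
  have h2 : ∫ x, (c⁻¹ * f (x * c⁻¹)) * Real.logb 2 (c⁻¹ * f (x * c⁻¹))
      = ∫ x, (c⁻¹ * ((fun y => f y * Real.logb 2 (f y)) (x * c⁻¹))
        - (c⁻¹ * Real.logb 2 c) * f (x * c⁻¹)) := by
    apply integral_congr_ae
    filter_upwards with x using hpt x
  have hi1 : Integrable (fun x => c⁻¹ * ((fun y => f y * Real.logb 2 (f y)) (x * c⁻¹))) :=
    (hflog.comp_mul_right' (inv_ne_zero hc')).const_mul _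
  have hi2 : Integrable (fun x => (c⁻¹ * Real.logb 2 c) * f (x * c⁻¹)) :=
    (hint.comp_mul_right' (inv_ne_zero hc')).const_mul _
  have hA : ∫ x, (fun y => f y * Real.logb 2 (f y)) (x * c⁻¹)
      = c * ∫ y, f y * Real.logb 2 (f y) := by
    rw [Measure.integral_comp_inv_mul_right (fun y => f y * Real.logb 2 (f y)) c,
      abs_of_pos hc, smul_eq_mul]
  have hB : ∫ x, f (x * c⁻¹) = c := by
    rw [Measure.integral_comp_inv_mul_right f c, abs_of_pos hc, smul_eq_mul, h1, mul_one]
  rw [h2, integral_sub hi1 hi2, integral_const_mul, integral_const_mul, hA, hB]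
  field_simp
  ring

lemma integrable_gpdf_mul_logb_gpdf' (hv : 0 < v) :
    Integrable (fun x => gpdf v x * Real.logb 2 (gpdf v x)) := by
  have h := integrable_gpdf_mul_logb_gpdf hv 0
  apply h.congr
  filter_upwards with x
  rw [sub_zero]

lemma ent_gpdf_scale (hc : 0 < c) (hv : 0 < v) :
    ent (gpdf (c ^ 2 * v)) = ent (gpdf v) + Real.logb 2 c := by
  have hfun : gpdf (c ^ 2 * v) = fun x => c⁻¹ * gpdf v (x * c⁻¹) := by
    funext x
    exact gpdf_scale hc hv x
  rw [hfun]
  exact ent_scale hc (gpdf v) (gpdf_nonneg hv) (integrable_gpdf hv) (integral_gpdf hv)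
    (integrable_gpdf_mul_logb_gpdf' hv)

lemma ent_mix_scale (hν : IsProbFinsuppR ν) (hc : 0 < c) (hv : 0 < v) (t : ℝ) :
    ent (mix ν (c * t) (c ^ 2 * v)) = ent (mix ν t v) + Real.logb 2 c := by
  have hfun : mix ν (c * t) (c ^ 2 * v) = fun x => c⁻¹ * mix ν t v (x * c⁻¹) := by
    funext x
    exact mix_scale hc hv t x
  rw [hfun]
  exact ent_scale hc (mix ν t v) (mix_nonneg hν hv) (integrable_mix hv) (integral_mix hν hv)
    (integrable_mix_mul_logb_mix hν hv)

/-! ### Identification of `smoothEnt` -/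

lemma smul_prod {c : ENNReal} (μ γ : Measure ℝ) [SFinite μ] [SFinite γ] :
    (c • μ).prod γ = c • (μ.prod γ) := by
  ext s hs
  rw [Measure.prod_apply hs, lintegral_smul_measure, Measure.smul_apply, Measure.prod_apply hs,
    smul_eq_mul]

lemma law_eq (hν : IsProbFinsuppR ν) (t : ℝ) :
    mconv (discLaw ν t) (ProbabilityTheory.gaussianReal 0 1)
      = volume.withDensity (fun x => ENNReal.ofReal (mix ν t 1 x)) := by
  classical
  unfold mconv discLaw
  haveI : ∀ (s : Finset ℝ), SFinite (∑ q ∈ s, ENNReal.ofReal (ν q) • Measure.dirac (t * q)) := by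
    intro s
    induction s using Finset.induction_on with
    | empty => simpa using inferInstanceAs (SFinite (0 : Measure ℝ))
    | insert q s' hnotmem ih =>
      rw [Finset.sum_insert hnotmem]
      haveI := ih
      infer_instance
  have hsum : ∀ s : Finset ℝ,
      (((∑ q ∈ s, ENNReal.ofReal (ν q) • Measure.dirac (t * q)).prod
        (ProbabilityTheory.gaussianReal 0 1)).map (fun p : ℝ × ℝ => p.1 + p.2))
      = ∑ q ∈ s, ENNReal.ofReal (ν q) •
          ((ProbabilityTheory.gaussianReal 0 1).map (fun x => t * q + x)) := by
    intro s
    induction s using Finset.induction_on with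
    | empty => simp
    | insert q s' hnotmem ih =>
      rw [Finset.sum_insert hnotmem, Measure.add_prod, Measure.map_add _ _ measurable_add,
        smul_prod, Measure.map_smul, Finset.sum_insert hnotmem, ih]
      congr 1
      rw [Measure.dirac_prod, Measure.map_map measurable_add measurable_prodMk_left]
      rfl
  rw [hsum]
  have hgauss : ∀ q : ℝ, (ProbabilityTheory.gaussianReal 0 1).map (fun x => t * q + x)
      = volume.withDensity (ProbabilityTheory.gaussianPDF (t * q) 1) := by
    intro q
    have h := ProbabilityTheory.gaussianReal_map_const_add (μ := 0) (v := 1) (t * q)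
    have h2 : (fun x => t * q + x) = (t * q + ·) := rfl
    rw [h2, h, zero_add, ProbabilityTheory.gaussianReal_of_var_ne_zero _ one_ne_zero]
  have hwd : ∀ s : Finset ℝ,
      ∑ q ∈ s, ENNReal.ofReal (ν q) • volume.withDensity (ProbabilityTheory.gaussianPDF (t * q) 1)
      = volume.withDensity
          (fun x => ∑ q ∈ s, ENNReal.ofReal (ν q) * ProbabilityTheory.gaussianPDF (t * q) 1 x) := by
    intro s
    induction s using Finset.induction_on with
    | empty => simp
    | insert q s' hnotmem ih =>
      rw [Finset.sum_insert hnotmem, ih,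
        ← withDensity_smul _ (ProbabilityTheory.measurable_gaussianPDF _ _),
        ← withDensity_add_left]
      · congr 1
        funext x
        rw [Finset.sum_insert hnotmem]
        rfl
      · exact (ProbabilityTheory.measurable_gaussianPDF _ _).const_smul _
  rw [Finset.sum_congr rfl fun q _ => by rw [hgauss q], hwd]
  congr 1
  funext x
  rw [show mix ν t 1 x = ∑ q ∈ ν.support, ν q * gpdf 1 (x - t * q) from rfl,
    ENNReal.ofReal_sum_of_nonneg fun q _ => mul_nonneg (hν.1 q) (gpdf_nonneg one_pos _)]
  apply Finset.sum_congr rfl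
  intro q _
  rw [ENNReal.ofReal_mul (hν.1 q)]
  congr 1

lemma smoothEnt_eq (hν : IsProbFinsuppR ν) (t : ℝ) : smoothEnt ν t = ent (mix ν t 1) := by
  unfold smoothEnt diffEnt
  rw [law_eq hν t]
  have hmeas : Measurable (fun x => ENNReal.ofReal (mix ν t 1 x)) :=
    (continuous_mix.measurable).ennreal_ofReal
  have hd := Measure.rnDeriv_withDensity (volume : Measure ℝ) hmeas
  unfold ent
  congr 1
  apply integral_congr_ae
  filter_upwards [hd] with x hx
  rw [hx, ENNReal.toReal_ofReal (mix_nonneg hν one_pos x)]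

lemma smoothEnt_formula (hν : IsProbFinsuppR ν) (t : ℝ) :
    smoothEnt ν t = ent (gpdf 1) + rel ν t 1 := by
  rw [smoothEnt_eq hν t, ent_mix_eq hν one_pos t]

/-! ### The two key consequences -/

lemma smoothEnt_mono (hν : IsProbFinsuppR ν) {t t' : ℝ} (ht : 0 < t) (htt' : t ≤ t') :
    smoothEnt ν t ≤ smoothEnt ν t' := by
  rcases eq_or_lt_of_le htt' with rfl | hlt
  · exact le_refl _
  have ht' : 0 < t' := lt_trans ht hlt
  set c : ℝ := t / t' with hcdef
  have hc : 0 < c := by positivity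
  have hc1 : c < 1 := by
    rw [hcdef, div_lt_one ht']
    exact hlt
  have hct' : c * t' = t := by
    rw [hcdef]
    field_simp
  have ha : 0 < 1 - c ^ 2 := by nlinarith
  have hb : 0 < c ^ 2 * 1 := by positivity
  have hcontr := rel_contract hν (a := 1 - c ^ 2) (b := c ^ 2 * 1) ha hb t
  have h1eq : (1 - c ^ 2) + c ^ 2 * 1 = 1 := by ring
  rw [h1eq] at hcontr
  have h1 : ent (mix ν (c * t') (c ^ 2 * 1)) = ent (mix ν t' 1) + Real.logb 2 c :=
    ent_mix_scale hν hc one_pos t'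
  rw [hct'] at h1
  have h2 : ent (gpdf (c ^ 2 * 1)) = ent (gpdf 1) + Real.logb 2 c := ent_gpdf_scale hc one_pos
  have h3 : ent (mix ν t (c ^ 2 * 1)) = ent (gpdf (c ^ 2 * 1)) + rel ν t (c ^ 2 * 1) :=
    ent_mix_eq hν hb t
  have h4 := smoothEnt_formula hν t
  have h5 := smoothEnt_eq hν t'
  linarith

lemma smoothEnt_diff_le (hν : IsProbFinsuppR ν) (s t : ℝ) :
    smoothEnt ν s - smoothEnt ν t ≤ Kc ν := by
  have h1 := smoothEnt_formula hν s
  have h2 := smoothEnt_formula hν t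
  have h3 := rel_le_Kc hν one_pos s
  have h4 := rel_nonneg hν one_pos t
  linarith

end S12

/-- `Φ_ν` is monotone increasing on `(0,∞)` and `Φ_ν(a²)/log₂(a²) ≤ Φ_ν(a)/log₂ a`
(equivalently `Φ_ν(a²) ≤ 2Φ_ν(a)`) for every `a > 1`. -/
theorem stmt12 (ν : ℝ →₀ ℝ) (hν : IsProbFinsuppR ν) :
    (∀ a b : ℝ, 0 < a → a ≤ b → Phi ν a ≤ Phi ν b) ∧
    (∀ a : ℝ, 1 < a →
      Phi ν (a ^ 2) / Real.logb 2 (a ^ 2) ≤ Phi ν a / Real.logb 2 a ∧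
      Phi ν (a ^ 2) ≤ 2 * Phi ν a) := by
  have hbdd : ∀ a : ℝ, BddAbove {r : ℝ | ∃ t : ℝ, 0 < t ∧ r = smoothEnt ν (t * a) - smoothEnt ν t} := by
    intro a
    refine ⟨S12.Kc ν, ?_⟩
    rintro r ⟨t, ht, rfl⟩
    exact S12.smoothEnt_diff_le hν _ _
  have hne : ∀ a : ℝ, ∃ r, r ∈ {r : ℝ | ∃ t : ℝ, 0 < t ∧ r = smoothEnt ν (t * a) - smoothEnt ν t} :=
    fun a => ⟨smoothEnt ν (1 * a) - smoothEnt ν 1, 1, one_pos, rfl⟩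
  have hmono : ∀ a b : ℝ, 0 < a → a ≤ b → Phi ν a ≤ Phi ν b := by
    intro a b ha hab
    apply csSup_le (Set.nonempty_def.mpr (hne a))
    rintro r ⟨t, ht, rfl⟩
    have h1 : smoothEnt ν (t * a) ≤ smoothEnt ν (t * b) :=
      S12.smoothEnt_mono hν (by positivity) (by nlinarith)
    have h2 : smoothEnt ν (t * b) - smoothEnt ν t ≤ Phi ν b :=
      le_csSup (hbdd b) ⟨t, ht, rfl⟩
    linarith
  refine ⟨hmono, fun a ha => ?_⟩
  have ha0 : (0 : ℝ) < a := lt_trans one_pos ha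
  have hkey : Phi ν (a ^ 2) ≤ 2 * Phi ν a := by
    apply csSup_le (Set.nonempty_def.mpr (hne (a ^ 2)))
    rintro r ⟨t, ht, rfl⟩
    have e1 : smoothEnt ν ((t * a) * a) - smoothEnt ν (t * a) ≤ Phi ν a :=
      le_csSup (hbdd a) ⟨t * a, by positivity, rfl⟩
    have e2 : smoothEnt ν (t * a) - smoothEnt ν t ≤ Phi ν a :=
      le_csSup (hbdd a) ⟨t, ht, rfl⟩
    have : t * a ^ 2 = (t * a) * a := by ring
    rw [this]
    linarith
  have hlog : Real.logb 2 (a ^ 2) = 2 * Real.logb 2 a := by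
    rw [Real.logb_pow]; norm_num
  have hla : 0 < Real.logb 2 a := Real.logb_pos one_lt_two ha
  constructor
  · rw [hlog, div_le_div_iff₀ (by positivity) hla]
    nlinarith
  · exact hkey
end

section
/- Let ν₀ be a finitely supported probability measure on ℝ and let c = inf_{√2 ≤ a ≤ 2} Φ_{ν₀}(a)/log₂ a. Then Φ_{ν₀}(a) ≥ c·min{log₂ a, 1} for all a > 1. -/
open MeasureTheory ProbabilityTheory

noncomputable def gpdf (v m x : ℝ) : ℝ :=
  (Real.sqrt (2 * Real.pi * v))⁻¹ * Real.exp (-(x - m)^2 / (2 * v))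


section GaussAux
variable {v m c x : ℝ}


lemma two_pi_v_pos (hv : 0 < v) : 0 < 2 * Real.pi * v := by positivity

lemma gpdf_pos (hv : 0 < v) : 0 < gpdf v m x := by
  have h := two_pi_v_pos hv
  unfold gpdf
  positivity

lemma gpdf_le (hv : 0 < v) : gpdf v m x ≤ (Real.sqrt (2 * Real.pi * v))⁻¹ := by
  have h1 : (0:ℝ) < Real.sqrt (2 * Real.pi * v) := Real.sqrt_pos.2 (two_pi_v_pos hv)
  have h2 : Real.exp (-(x - m)^2 / (2 * v)) ≤ 1 := by
    rw [Real.exp_le_one_iff, neg_div]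
    have : 0 ≤ (x - m)^2 / (2*v) := by positivity
    linarith
  calc gpdf v m x ≤ (Real.sqrt (2 * Real.pi * v))⁻¹ * 1 := by
        exact mul_le_mul_of_nonneg_left h2 (by positivity)
    _ = _ := mul_one _

lemma continuous_gpdf : Continuous (gpdf v m) := by
  unfold gpdf
  fun_prop

lemma gpdf_exp_eq : (fun x => Real.exp (-(x - m)^2 / (2*v))) = fun x => Real.exp (-(2*v)⁻¹ * (x - m)^2) := by
  funext x; ring_nf

lemma integrable_gpdf (hv : 0 < v) : Integrable (gpdf v m) := by
  unfold gpdf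
  refine Integrable.const_mul ?_ _
  rw [gpdf_exp_eq]
  exact (integrable_exp_neg_mul_sq (by positivity)).comp_sub_right m

lemma integral_exp_gauss (hv : 0 < v) : ∫ x : ℝ, Real.exp (-(x - m)^2 / (2*v)) = Real.sqrt (2 * Real.pi * v) := by
  rw [gpdf_exp_eq]
  rw [integral_sub_right_eq_self (fun x => Real.exp (-(2*v)⁻¹ * x^2)) m]
  rw [integral_gaussian]
  congr 1
  field_simp

lemma integral_gpdf (hv : 0 < v) : ∫ x : ℝ, gpdf v m x = 1 := by
  unfold gpdf
  rw [MeasureTheory.integral_const_mul, integral_exp_gauss hv]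
  field_simp

lemma integrable_sq_exp {b : ℝ} (hb : 0 < b) : Integrable (fun u : ℝ => u^2 * Real.exp (-b * u^2)) := by
  refine Integrable.mono' ((integrable_exp_neg_mul_sq (half_pos hb)).const_mul (2/b)) ?_ ?_
  · exact ((continuous_pow 2).mul (by fun_prop : Continuous fun u : ℝ => Real.exp (-b*u^2))).aestronglyMeasurable
  · refine Filter.Eventually.of_forall (fun u => ?_)
    have h1 : (b/2) * u^2 + 1 ≤ Real.exp ((b/2) * u^2) := Real.add_one_le_exp _
    have h4' : b * u^2 ≤ 2 * Real.exp ((b/2) * u^2) := by nlinarith [Real.exp_pos ((b/2) * u^2)]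
    have h3 : ‖u^2 * Real.exp (-b * u^2)‖ = u^2 * Real.exp (-b * u^2) := by
      rw [Real.norm_eq_abs, abs_of_nonneg]; positivity
    rw [h3, div_mul_eq_mul_div, le_div_iff₀ hb]
    have hE : Real.exp (-(b/2) * u^2) = Real.exp ((b/2)*u^2) * Real.exp (-b*u^2) := by
      rw [← Real.exp_add]; congr 1; ring
    rw [hE]
    nlinarith [mul_le_mul_of_nonneg_right h4' (Real.exp_pos (-b*u^2)).le]

lemma integrable_gpdf_mul_sq (hv : 0 < v) (c : ℝ) :
    Integrable (fun x => gpdf v m x * (x - c)^2) := by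
  have key : Integrable (fun x => (Real.sqrt (2 * Real.pi * v))⁻¹ *
      ((x - m)^2 * Real.exp (-(2*v)⁻¹ * (x-m)^2))) :=
    (((integrable_sq_exp (b := (2*v)⁻¹) (by positivity)).comp_sub_right m).const_mul _)
  -- gpdf v m x * (x-c)^2 ≤ gpdf*(2(x-m)^2 + 2(m-c)^2)
  have h2 : Integrable (fun x => gpdf v m x * (x - m)^2) := by
    have : (fun x => gpdf v m x * (x - m)^2) = fun x => (Real.sqrt (2 * Real.pi * v))⁻¹ *
      ((x - m)^2 * Real.exp (-(2*v)⁻¹ * (x-m)^2)) := by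
      funext x; unfold gpdf; ring_nf
    rw [this]; exact key
  refine Integrable.mono' (g := fun x => 2 * (gpdf v m x * (x-m)^2) + 2*(m-c)^2 * gpdf v m x)
    ((h2.const_mul 2).add ((integrable_gpdf hv).const_mul (2*(m-c)^2))) ?_ ?_
  · exact (continuous_gpdf.mul (by fun_prop)).aestronglyMeasurable
  · refine Filter.Eventually.of_forall (fun x => ?_)
    have hg := gpdf_pos (m := m) (x := x) hv
    have hb : (x - c)^2 ≤ 2*(x-m)^2 + 2*(m-c)^2 := by nlinarith [sq_nonneg (x - m + (m - c)), sq_nonneg (x - m - (m-c))]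
    have : ‖gpdf v m x * (x - c)^2‖ = gpdf v m x * (x-c)^2 := by
      rw [Real.norm_eq_abs, abs_of_nonneg]; positivity
    rw [this]
    calc gpdf v m x * (x-c)^2 ≤ gpdf v m x * (2*(x-m)^2 + 2*(m-c)^2) := by
          exact mul_le_mul_of_nonneg_left hb hg.le
      _ = 2 * (gpdf v m x * (x-m)^2) + 2*(m-c)^2 * gpdf v m x := by ring

lemma sigma2_pos {ρ : ℝ} (hρ0 : 0 < ρ) (hρ1 : ρ < 1) : 0 < 1 - ρ^2 := by nlinarith

lemma kernel_mul_gpdf {ρ : ℝ} (hρ0 : 0 < ρ) (hρ1 : ρ < 1) (m x y : ℝ) :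
    gpdf (1-ρ^2) (ρ*y) x * gpdf 1 m y
      = gpdf 1 (ρ*m) x * gpdf (1-ρ^2) (ρ*x + (1-ρ^2)*m) y := by
  have hσ : 0 < 1 - ρ^2 := sigma2_pos hρ0 hρ1
  have hσ' : (1:ℝ) - ρ^2 ≠ 0 := ne_of_gt hσ
  have hexp : Real.exp (-(x-ρ*y)^2/(2*(1-ρ^2))) * Real.exp (-(y-m)^2/(2*1))
      = Real.exp (-(x-ρ*m)^2/(2*1)) * Real.exp (-(y-(ρ*x+(1-ρ^2)*m))^2/(2*(1-ρ^2))) := by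
    rw [← Real.exp_add, ← Real.exp_add]
    congr 1
    field_simp
    ring
  unfold gpdf
  linear_combination ((Real.sqrt (2*Real.pi*(1-ρ^2)))⁻¹ * (Real.sqrt (2*Real.pi*1))⁻¹) * hexp

lemma integral_kernel_gpdf {ρ : ℝ} (hρ0 : 0 < ρ) (hρ1 : ρ < 1) (m x : ℝ) :
    ∫ y : ℝ, gpdf (1-ρ^2) (ρ*y) x * gpdf 1 m y = gpdf 1 (ρ*m) x := by
  have hσ : 0 < 1 - ρ^2 := sigma2_pos hρ0 hρ1
  simp_rw [kernel_mul_gpdf hρ0 hρ1 m x]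
  rw [MeasureTheory.integral_const_mul, integral_gpdf hσ, mul_one]

lemma integrable_kernel_gpdf {ρ : ℝ} (hρ0 : 0 < ρ) (hρ1 : ρ < 1) (m x : ℝ) :
    Integrable (fun y : ℝ => gpdf (1-ρ^2) (ρ*y) x * gpdf 1 m y) := by
  have hσ : 0 < 1 - ρ^2 := sigma2_pos hρ0 hρ1
  simp_rw [kernel_mul_gpdf hρ0 hρ1 m x]
  exact (integrable_gpdf hσ).const_mul _

end GaussAux

namespace Stmt13Aux

/-- The mixture-of-Gaussians density of `t·ξ₀ + G`. -/
noncomputable def pmix (ν : ℝ →₀ ℝ) (t : ℝ) (x : ℝ) : ℝ :=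
  ∑ q ∈ ν.support, ν q * gpdf 1 (t*q) x

/-- `∫ p log p` for the mixture density. -/
noncomputable def entInt (ν : ℝ →₀ ℝ) (t : ℝ) : ℝ :=
  ∫ x : ℝ, pmix ν t x * Real.log (pmix ν t x)

lemma gaussianPDF_eq (m : ℝ) (x : ℝ) :
    ProbabilityTheory.gaussianPDF m 1 x = ENNReal.ofReal (gpdf 1 m x) := by
  unfold ProbabilityTheory.gaussianPDF ProbabilityTheory.gaussianPDFReal gpdf
  norm_num

section Main

variable {ν : ℝ →₀ ℝ} (hν : IsProbFinsuppR ν) {t x : ℝ}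
include hν

lemma supp_nonempty : ν.support.Nonempty := by
  rcases Finset.eq_empty_or_nonempty ν.support with h | h
  · exfalso
    have := hν.2
    rw [h] at this
    simp at this
  · exact h

lemma w_pos {q : ℝ} (hq : q ∈ ν.support) : 0 < ν q :=
  lt_of_le_of_ne (hν.1 q) (Ne.symm (Finsupp.mem_support_iff.mp hq))

lemma w_le_one {q : ℝ} (hq : q ∈ ν.support) : ν q ≤ 1 := by
  rw [← hν.2]
  exact Finset.single_le_sum (fun i _ => hν.1 i) hq

lemma pmix_pos : 0 < pmix ν t x := by
  unfold pmix
  obtain ⟨q, hq⟩ := supp_nonempty hν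
  refine Finset.sum_pos' (fun i hi => ?_) ⟨q, hq, ?_⟩
  · exact mul_nonneg (hν.1 i) (gpdf_pos one_pos).le
  · exact mul_pos (w_pos hν hq) (gpdf_pos one_pos)

lemma term_le_pmix {q : ℝ} (hq : q ∈ ν.support) :
    ν q * gpdf 1 (t*q) x ≤ pmix ν t x := by
  unfold pmix
  exact Finset.single_le_sum (fun i _ => mul_nonneg (hν.1 i) (gpdf_pos one_pos).le) hq

lemma pmix_le : pmix ν t x ≤ (Real.sqrt (2*Real.pi*1))⁻¹ := by
  unfold pmix
  calc ∑ q ∈ ν.support, ν q * gpdf 1 (t*q) x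
      ≤ ∑ q ∈ ν.support, ν q * (Real.sqrt (2*Real.pi*1))⁻¹ :=
        Finset.sum_le_sum fun i _ => mul_le_mul_of_nonneg_left (gpdf_le one_pos) (hν.1 i)
    _ = (Real.sqrt (2*Real.pi*1))⁻¹ := by rw [← Finset.sum_mul, hν.2, one_mul]

omit hν in
lemma continuous_pmix : Continuous (pmix ν t) := by
  unfold pmix
  exact continuous_finset_sum _ fun q _ => continuous_const.mul continuous_gpdf

omit hν in
lemma integrable_pmix : Integrable (pmix ν t) := by
  unfold pmix
  exact integrable_finset_sum _ fun q _ => ((integrable_gpdf one_pos).const_mul _)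

lemma integral_pmix : ∫ x : ℝ, pmix ν t x = 1 := by
  unfold pmix
  rw [integral_finset_sum _ fun q _ => ((integrable_gpdf one_pos).const_mul _)]
  simp_rw [MeasureTheory.integral_const_mul, integral_gpdf one_pos, mul_one]
  exact hν.2

lemma mconv_discLaw (t : ℝ) :
    mconv (discLaw ν t) (gaussianReal 0 1)
      = volume.withDensity (fun x => ENNReal.ofReal (pmix ν t x)) := by
  have hadd : Measurable (fun p : ℝ × ℝ => p.1 + p.2) := measurable_fst.add measurable_snd
  ext s hs
  have hs' : MeasurableSet ((fun p : ℝ × ℝ => p.1 + p.2) ⁻¹' s) := hadd hs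
  rw [mconv, Measure.map_apply hadd hs, Measure.prod_apply hs']
  unfold discLaw
  rw [lintegral_finset_sum_measure]
  have hmeas : Measurable fun x : ℝ =>
      (gaussianReal 0 1) (Prod.mk x ⁻¹' ((fun p : ℝ × ℝ => p.1 + p.2) ⁻¹' s)) :=
    measurable_measure_prodMk_left hs'
  simp_rw [lintegral_smul_measure, lintegral_dirac' _ hmeas]
  have hkey : ∀ m : ℝ, (gaussianReal 0 1)
      (Prod.mk m ⁻¹' ((fun p : ℝ × ℝ => p.1 + p.2) ⁻¹' s))
      = ∫⁻ x in s, ENNReal.ofReal (gpdf 1 m x) := by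
    intro m
    have h1 : (Prod.mk m ⁻¹' ((fun p : ℝ × ℝ => p.1 + p.2) ⁻¹' s))
        = (fun y => m + y) ⁻¹' s := rfl
    have h2 : (gaussianReal 0 1) ((fun y => m + y) ⁻¹' s)
        = ((gaussianReal 0 1).map (fun y => m + y)) s := by
      rw [Measure.map_apply (by fun_prop : Measurable (fun y : ℝ => m + y)) hs]
    have h3 : (gaussianReal 0 1).map (fun y => m + y) = gaussianReal m 1 := by
      have := ProbabilityTheory.gaussianReal_map_const_add (μ := 0) (v := 1) m
      simpa using this
    rw [h1, h2, h3, ProbabilityTheory.gaussianReal_apply m one_ne_zero s]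
    exact lintegral_congr fun x => by rw [gaussianPDF_eq]
  simp_rw [hkey]
  rw [withDensity_apply _ hs]
  have hof : ∀ x, ENNReal.ofReal (pmix ν t x)
      = ∑ q ∈ ν.support, ENNReal.ofReal (ν q) * ENNReal.ofReal (gpdf 1 (t*q) x) := by
    intro x
    unfold pmix
    rw [ENNReal.ofReal_sum_of_nonneg fun i _ => mul_nonneg (hν.1 i) (gpdf_pos one_pos).le]
    exact Finset.sum_congr rfl fun i _ =>
      ENNReal.ofReal_mul (hν.1 i)
  simp_rw [hof]
  rw [lintegral_finset_sum]
  · exact Finset.sum_congr rfl fun q _ => by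
      rw [lintegral_const_mul _ (by
        exact (ENNReal.measurable_ofReal.comp (continuous_gpdf.measurable))), smul_eq_mul]
  · intro q _
    exact (ENNReal.measurable_ofReal.comp (continuous_gpdf.measurable)).const_mul _

lemma smoothEnt_eq (t : ℝ) :
    smoothEnt ν t = -((Real.log 2)⁻¹ * entInt ν t) := by
  unfold smoothEnt diffEnt entInt
  have hmeas : Measurable fun x => ENNReal.ofReal (pmix ν t x) :=
    ENNReal.measurable_ofReal.comp (continuous_pmix.measurable)
  have hae : (mconv (discLaw ν t) (gaussianReal 0 1)).rnDeriv volume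
      =ᵐ[volume] fun x => ENNReal.ofReal (pmix ν t x) := by
    rw [mconv_discLaw hν]
    exact Measure.rnDeriv_withDensity volume hmeas
  have h1 : ∫ x, ((mconv (discLaw ν t) (gaussianReal 0 1)).rnDeriv volume x).toReal *
      Real.logb 2 ((mconv (discLaw ν t) (gaussianReal 0 1)).rnDeriv volume x).toReal
      = ∫ x, (Real.log 2)⁻¹ * (pmix ν t x * Real.log (pmix ν t x)) := by
    refine integral_congr_ae (hae.mono fun x hx => ?_)
    dsimp only at hx ⊢
    rw [hx, ENNReal.toReal_ofReal (pmix_pos hν).le, Real.logb, div_eq_inv_mul]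
    ring
  rw [h1, MeasureTheory.integral_const_mul]

omit hν in
lemma gpdf_log {v m x : ℝ} (hv : 0 < v) :
    Real.log (gpdf v m x) = -Real.log (Real.sqrt (2*Real.pi*v)) + (-(x-m)^2/(2*v)) := by
  unfold gpdf
  rw [Real.log_mul (by positivity) (Real.exp_ne_zero _), Real.log_inv, Real.log_exp]

omit hν in
lemma gpdf_shift {v m x : ℝ} : gpdf v m x = gpdf v 0 (x - m) := by
  unfold gpdf
  ring_nf

/-- `∫ γ log γ` for the standard Gaussian density (as an abstract constant). -/
noncomputable def C0 : ℝ := ∫ u : ℝ, gpdf 1 0 u * Real.log (gpdf 1 0 u)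

omit hν in
lemma integrable_gpdf_log {v m : ℝ} (hv : 0 < v) :
    Integrable (fun x => gpdf v m x * Real.log (gpdf v m x)) := by
  have heq : (fun x => gpdf v m x * Real.log (gpdf v m x))
      = fun x => (-Real.log (Real.sqrt (2*Real.pi*v))) * gpdf v m x
          + (-(2*v)⁻¹) * (gpdf v m x * (x-m)^2) := by
    funext x
    rw [gpdf_log hv]
    field_simp
  rw [heq]
  exact ((integrable_gpdf hv).const_mul _).add ((integrable_gpdf_mul_sq hv m).const_mul _)

omit hν in
lemma integral_gpdf_log (m : ℝ) :
    ∫ x : ℝ, gpdf 1 m x * Real.log (gpdf 1 m x) = C0 := by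
  unfold C0
  have heq : (fun x => gpdf 1 m x * Real.log (gpdf 1 m x))
      = fun x => gpdf 1 0 (x - m) * Real.log (gpdf 1 0 (x - m)) := by
    funext x
    rw [← gpdf_shift]
  rw [heq]
  exact integral_sub_right_eq_self (fun u => gpdf 1 0 u * Real.log (gpdf 1 0 u)) m

/-- Pointwise lower bound for `p log p`. -/
lemma plogp_lower :
    ∑ q ∈ ν.support, ν q * gpdf 1 (t*q) x * (Real.log (ν q) + Real.log (gpdf 1 (t*q) x))
      ≤ pmix ν t x * Real.log (pmix ν t x) := by
  have hrw : pmix ν t x * Real.log (pmix ν t x)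
      = ∑ q ∈ ν.support, ν q * gpdf 1 (t*q) x * Real.log (pmix ν t x) := by
    unfold pmix
    rw [Finset.sum_mul]
  rw [hrw]
  refine Finset.sum_le_sum fun q hq => ?_
  have h1 : 0 < ν q * gpdf 1 (t*q) x := mul_pos (w_pos hν hq) (gpdf_pos one_pos)
  have h2 : Real.log (ν q) + Real.log (gpdf 1 (t*q) x) ≤ Real.log (pmix ν t x) := by
    rw [← Real.log_mul (w_pos hν hq).ne' (gpdf_pos one_pos).ne']
    exact Real.log_le_log h1 (term_le_pmix hν hq)
  exact mul_le_mul_of_nonneg_left h2 h1.le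

lemma integrable_plogp_lower :
    Integrable (fun x => ∑ q ∈ ν.support, ν q * gpdf 1 (t*q) x *
      (Real.log (ν q) + Real.log (gpdf 1 (t*q) x))) := by
  refine integrable_finset_sum _ fun q hq => ?_
  have heq : (fun x => ν q * gpdf 1 (t*q) x * (Real.log (ν q) + Real.log (gpdf 1 (t*q) x)))
      = fun x => (ν q * Real.log (ν q)) * gpdf 1 (t*q) x
          + ν q * (gpdf 1 (t*q) x * Real.log (gpdf 1 (t*q) x)) := by
    funext x; ring
  rw [heq]
  exact (((integrable_gpdf one_pos).const_mul _)).add ((integrable_gpdf_log one_pos).const_mul _)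

lemma integral_plogp_lower :
    ∫ x : ℝ, (∑ q ∈ ν.support, ν q * gpdf 1 (t*q) x *
      (Real.log (ν q) + Real.log (gpdf 1 (t*q) x)))
      = (∑ q ∈ ν.support, ν q * Real.log (ν q)) + C0 := by
  have heq : ∀ q : ℝ, (fun x => ν q * gpdf 1 (t*q) x * (Real.log (ν q) + Real.log (gpdf 1 (t*q) x)))
      = fun x => (ν q * Real.log (ν q)) * gpdf 1 (t*q) x
          + ν q * (gpdf 1 (t*q) x * Real.log (gpdf 1 (t*q) x)) := by
    intro q; funext x; ring
  rw [integral_finset_sum _ fun q hq => ?_]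
  · have : ∀ q ∈ ν.support, (∫ x : ℝ, ν q * gpdf 1 (t*q) x * (Real.log (ν q) + Real.log (gpdf 1 (t*q) x)))
        = ν q * Real.log (ν q) + ν q * C0 := by
      intro q hq
      rw [heq q]
      rw [integral_add (((integrable_gpdf one_pos).const_mul _)) ((integrable_gpdf_log one_pos).const_mul _)]
      rw [MeasureTheory.integral_const_mul, MeasureTheory.integral_const_mul, integral_gpdf one_pos,
        integral_gpdf_log (t*q), mul_one]
    rw [Finset.sum_congr rfl this, Finset.sum_add_distrib, ← Finset.sum_mul, hν.2, one_mul]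
  · rw [heq q]
    exact (((integrable_gpdf one_pos).const_mul _)).add ((integrable_gpdf_log one_pos).const_mul _)

lemma integrable_plogp : Integrable (fun x => pmix ν t x * Real.log (pmix ν t x)) := by
  have h2pi : (1:ℝ) ≤ Real.sqrt (2*Real.pi*1) := by
    rw [show (2*Real.pi*1 : ℝ) = 2*Real.pi by ring]
    rw [show (1:ℝ) = Real.sqrt 1 by rw [Real.sqrt_one]]
    exact Real.sqrt_le_sqrt (by nlinarith [Real.pi_gt_three])
  have hmeas : AEStronglyMeasurable (fun x => pmix ν t x * Real.log (pmix ν t x)) volume := by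
    refine Continuous.aestronglyMeasurable ?_
    exact continuous_pmix.mul (continuous_pmix.log fun x => (pmix_pos hν).ne')
  refine Integrable.mono' (g := fun x => pmix ν t x * |Real.log ((Real.sqrt (2*Real.pi*1))⁻¹)|
      + ∑ q ∈ ν.support, ν q * gpdf 1 (t*q) x *
        (|Real.log (ν q)| + Real.log (Real.sqrt (2*Real.pi*1)) + (x - t*q)^2/2)) ?_ hmeas ?_
  · refine (integrable_pmix.mul_const _).add (integrable_finset_sum _ fun q hq => ?_)
    have heq : (fun x => ν q * gpdf 1 (t*q) x *
        (|Real.log (ν q)| + Real.log (Real.sqrt (2*Real.pi*1)) + (x - t*q)^2/2))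
        = fun x => (ν q * (|Real.log (ν q)| + Real.log (Real.sqrt (2*Real.pi*1)))) * gpdf 1 (t*q) x
            + (ν q / 2) * (gpdf 1 (t*q) x * (x - t*q)^2) := by
      funext x; ring
    rw [heq]
    exact ((integrable_gpdf one_pos).const_mul _).add ((integrable_gpdf_mul_sq one_pos _).const_mul _)
  · refine Filter.Eventually.of_forall fun x => ?_
    have hp := pmix_pos hν (t := t) (x := x)
    have hup : pmix ν t x * Real.log (pmix ν t x)
        ≤ pmix ν t x * |Real.log ((Real.sqrt (2*Real.pi*1))⁻¹)| := by
      have h1 : Real.log (pmix ν t x) ≤ Real.log ((Real.sqrt (2*Real.pi*1))⁻¹) :=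
        Real.log_le_log hp (pmix_le hν)
      have h2 : Real.log ((Real.sqrt (2*Real.pi*1))⁻¹) ≤ |Real.log ((Real.sqrt (2*Real.pi*1))⁻¹)| :=
        le_abs_self _
      exact mul_le_mul_of_nonneg_left (h1.trans h2) hp.le
    have hlow := plogp_lower hν (t := t) (x := x)
    have hterm : ∀ q ∈ ν.support,
        - (ν q * gpdf 1 (t*q) x * (Real.log (ν q) + Real.log (gpdf 1 (t*q) x)))
        ≤ ν q * gpdf 1 (t*q) x *
          (|Real.log (ν q)| + Real.log (Real.sqrt (2*Real.pi*1)) + (x - t*q)^2/2) := by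
      intro q hq
      have hwg : 0 ≤ ν q * gpdf 1 (t*q) x := (mul_pos (w_pos hν hq) (gpdf_pos one_pos)).le
      have h3 : -(Real.log (ν q) + Real.log (gpdf 1 (t*q) x))
          ≤ |Real.log (ν q)| + Real.log (Real.sqrt (2*Real.pi*1)) + (x - t*q)^2/2 := by
        have h4 : -Real.log (ν q) ≤ |Real.log (ν q)| := neg_le_abs _
        have h5 : -Real.log (gpdf 1 (t*q) x)
            = Real.log (Real.sqrt (2*Real.pi*1)) + (x - t*q)^2/(2*1) := by
          rw [gpdf_log one_pos]; ring
        rw [neg_add]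
        rw [h5]
        have : (x - t*q)^2/(2*1) = (x-t*q)^2/2 := by norm_num
        rw [this]
        linarith
      calc -(ν q * gpdf 1 (t*q) x * (Real.log (ν q) + Real.log (gpdf 1 (t*q) x)))
          = ν q * gpdf 1 (t*q) x * (-(Real.log (ν q) + Real.log (gpdf 1 (t*q) x))) := by ring
        _ ≤ _ := mul_le_mul_of_nonneg_left h3 hwg
    have hsum : - ∑ q ∈ ν.support, ν q * gpdf 1 (t*q) x *
          (Real.log (ν q) + Real.log (gpdf 1 (t*q) x))
        ≤ ∑ q ∈ ν.support, ν q * gpdf 1 (t*q) x *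
          (|Real.log (ν q)| + Real.log (Real.sqrt (2*Real.pi*1)) + (x - t*q)^2/2) := by
      rw [← Finset.sum_neg_distrib]
      exact Finset.sum_le_sum hterm
    have hDom2 : 0 ≤ ∑ q ∈ ν.support, ν q * gpdf 1 (t*q) x *
        (|Real.log (ν q)| + Real.log (Real.sqrt (2*Real.pi*1)) + (x - t*q)^2/2) := by
      refine Finset.sum_nonneg fun q hq => ?_
      have := Real.log_nonneg h2pi
      have hg := (gpdf_pos (v := 1) (m := t*q) (x := x) one_pos).le
      have hw := (w_pos hν hq).le
      positivity
    have h6 : 0 ≤ pmix ν t x * |Real.log ((Real.sqrt (2*Real.pi*1))⁻¹)| :=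
      mul_nonneg hp.le (abs_nonneg _)
    rw [Real.norm_eq_abs, abs_le]
    constructor
    · linarith [hlow, hsum]
    · linarith [hup]

lemma entInt_le : entInt ν t ≤ Real.log ((Real.sqrt (2*Real.pi*1))⁻¹) := by
  unfold entInt
  have h1 : ∫ x : ℝ, pmix ν t x * Real.log (pmix ν t x)
      ≤ ∫ x : ℝ, pmix ν t x * Real.log ((Real.sqrt (2*Real.pi*1))⁻¹) := by
    refine integral_mono (integrable_plogp hν) (integrable_pmix.mul_const _) fun x => ?_
    exact mul_le_mul_of_nonneg_left (Real.log_le_log (pmix_pos hν) (pmix_le hν)) (pmix_pos hν).le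
  calc ∫ x : ℝ, pmix ν t x * Real.log (pmix ν t x) ≤ _ := h1
    _ = Real.log ((Real.sqrt (2*Real.pi*1))⁻¹) := by
        rw [MeasureTheory.integral_mul_const, integral_pmix hν, one_mul]

lemma le_entInt : (∑ q ∈ ν.support, ν q * Real.log (ν q)) + C0 ≤ entInt ν t := by
  unfold entInt
  rw [← integral_plogp_lower hν (t := t)]
  exact integral_mono (integrable_plogp_lower hν) (integrable_plogp hν)
    fun x => plogp_lower hν


end Main
end Stmt13Aux

namespace Stmt13Aux

/-- The Gaussian transition kernel density linking scale `t` to scale `s`. -/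
noncomputable def kk (s t x y : ℝ) : ℝ := gpdf (1-(s/t)^2) ((s/t)*y) x

section MonoAux

variable {ν : ℝ →₀ ℝ} (hν : IsProbFinsuppR ν) {s t x m : ℝ}
include hν

omit hν in
lemma rho_pos (hs : 0 < s) (hst : s < t) : 0 < s/t := div_pos hs (hs.trans hst)

omit hν in
lemma rho_lt_one (hs : 0 < s) (hst : s < t) : s/t < 1 :=
  (div_lt_one (hs.trans hst)).2 hst

omit hν in
lemma sig_pos (hs : 0 < s) (hst : s < t) : 0 < 1 - (s/t)^2 :=
  sigma2_pos (rho_pos hs hst) (rho_lt_one hs hst)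

omit hν in
lemma continuous_kk (hs : 0 < s) (hst : s < t) :
    Continuous (fun z : ℝ × ℝ => kk s t z.1 z.2) := by
  unfold kk gpdf
  have h := (sig_pos hs hst).ne'
  fun_prop

lemma abs_log_pmix_le (t : ℝ) : ∃ q0 ∈ ν.support, ∀ y : ℝ,
    |Real.log (pmix ν t y)| ≤ Real.log (Real.sqrt (2*Real.pi*1)) + |Real.log (ν q0)|
      + (y - t*q0)^2/2 := by
  obtain ⟨q0, hq0⟩ := supp_nonempty hν
  have h2pi : (1:ℝ) ≤ Real.sqrt (2*Real.pi*1) := by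
    rw [show (2*Real.pi*1 : ℝ) = 2*Real.pi by ring]
    rw [show (1:ℝ) = Real.sqrt 1 by rw [Real.sqrt_one]]
    exact Real.sqrt_le_sqrt (by nlinarith [Real.pi_gt_three])
  have hlog2pi : 0 ≤ Real.log (Real.sqrt (2*Real.pi*1)) := Real.log_nonneg h2pi
  refine ⟨q0, hq0, fun y => ?_⟩
  have hp := pmix_pos hν (t := t) (x := y)
  rw [abs_le]
  constructor
  · have h1 : Real.log (ν q0) + Real.log (gpdf 1 (t*q0) y) ≤ Real.log (pmix ν t y) := by
      rw [← Real.log_mul (w_pos hν hq0).ne' (gpdf_pos one_pos).ne']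
      exact Real.log_le_log (mul_pos (w_pos hν hq0) (gpdf_pos one_pos)) (term_le_pmix hν hq0)
    have h2 : Real.log (gpdf 1 (t*q0) y)
        = -Real.log (Real.sqrt (2*Real.pi*1)) + (-(y-t*q0)^2/(2*1)) := gpdf_log one_pos
    have h3 : -|Real.log (ν q0)| ≤ Real.log (ν q0) := neg_abs_le _
    have h4 : (-(y-t*q0)^2/(2*1) : ℝ) = -((y-t*q0)^2/2) := by ring
    rw [h2, h4] at h1
    linarith
  · have h5 : Real.log (pmix ν t y) ≤ Real.log ((Real.sqrt (2*Real.pi*1))⁻¹) :=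
      Real.log_le_log hp (pmix_le hν)
    have h6 : Real.log ((Real.sqrt (2*Real.pi*1))⁻¹) = -Real.log (Real.sqrt (2*Real.pi*1)) :=
      Real.log_inv _
    have h7 : 0 ≤ (y - t*q0)^2/2 := by positivity
    have h8 : 0 ≤ |Real.log (ν q0)| := abs_nonneg _
    linarith

lemma integrable_gpdf_logdiff (t m : ℝ) :
    Integrable (fun y => gpdf 1 m y *
      (Real.log (pmix ν t y) - Real.log (gpdf 1 m y))) := by
  obtain ⟨q0, hq0, hbd⟩ := abs_log_pmix_le hν t
  have h1 : Integrable (fun y => gpdf 1 m y * Real.log (pmix ν t y)) := by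
    refine Integrable.mono' (g := fun y => gpdf 1 m y *
        (Real.log (Real.sqrt (2*Real.pi*1)) + |Real.log (ν q0)| + (y - t*q0)^2/2)) ?_ ?_ ?_
    · have heq : (fun y => gpdf 1 m y *
          (Real.log (Real.sqrt (2*Real.pi*1)) + |Real.log (ν q0)| + (y - t*q0)^2/2))
          = fun y => (Real.log (Real.sqrt (2*Real.pi*1)) + |Real.log (ν q0)|) * gpdf 1 m y
              + (1/2) * (gpdf 1 m y * (y - t*q0)^2) := by
        funext y; ring
      rw [heq]
      exact ((integrable_gpdf one_pos).const_mul _).add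
        ((integrable_gpdf_mul_sq one_pos _).const_mul _)
    · exact (continuous_gpdf.mul ((continuous_pmix.log
        fun y => (pmix_pos hν).ne'))).aestronglyMeasurable
    · refine Filter.Eventually.of_forall fun y => ?_
      rw [Real.norm_eq_abs, abs_mul, abs_of_nonneg (gpdf_pos (v := 1) one_pos).le]
      exact mul_le_mul_of_nonneg_left (hbd y) (gpdf_pos one_pos).le
  have heq2 : (fun y => gpdf 1 m y * (Real.log (pmix ν t y) - Real.log (gpdf 1 m y)))
      = fun y => gpdf 1 m y * Real.log (pmix ν t y)
          - gpdf 1 m y * Real.log (gpdf 1 m y) := by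
    funext y; ring
  rw [heq2]
  exact h1.sub (integrable_gpdf_log one_pos)

lemma entInt_decomp (t : ℝ) :
    entInt ν t = C0 + ∑ q ∈ ν.support, ν q * ∫ y : ℝ, gpdf 1 (t*q) y *
      (Real.log (pmix ν t y) - Real.log (gpdf 1 (t*q) y)) := by
  have hterm : ∀ q ∈ ν.support,
      (∫ y : ℝ, gpdf 1 (t*q) y * (Real.log (pmix ν t y) - Real.log (gpdf 1 (t*q) y)))
        = (∫ y : ℝ, gpdf 1 (t*q) y * Real.log (pmix ν t y)) - C0 := by
    intro q hq
    have heq2 : (fun y => gpdf 1 (t*q) y * (Real.log (pmix ν t y) - Real.log (gpdf 1 (t*q) y)))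
        = fun y => gpdf 1 (t*q) y * Real.log (pmix ν t y)
            - gpdf 1 (t*q) y * Real.log (gpdf 1 (t*q) y) := by
      funext y; ring
    have h1 : Integrable (fun y => gpdf 1 (t*q) y * Real.log (pmix ν t y)) := by
      have := (integrable_gpdf_logdiff hν t (t*q)).add (integrable_gpdf_log (v := 1) (m := t*q) one_pos)
      refine this.congr (Filter.Eventually.of_forall fun y => ?_)
      simp only [Pi.add_apply]
      ring
    rw [heq2, integral_sub h1 (integrable_gpdf_log one_pos), integral_gpdf_log]
  rw [Finset.sum_congr rfl fun q hq => by rw [hterm q hq]]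
  have hsplit : ∑ q ∈ ν.support, ν q * ((∫ y : ℝ, gpdf 1 (t*q) y * Real.log (pmix ν t y)) - C0)
      = (∑ q ∈ ν.support, ν q * ∫ y : ℝ, gpdf 1 (t*q) y * Real.log (pmix ν t y)) - C0 := by
    simp_rw [mul_sub]
    rw [Finset.sum_sub_distrib, ← Finset.sum_mul, hν.2, one_mul]
  rw [hsplit]
  have hint : ∀ q ∈ ν.support, Integrable (fun y => ν q * (gpdf 1 (t*q) y * Real.log (pmix ν t y))) := by
    intro q _
    refine Integrable.const_mul ?_ _
    have h2 := (integrable_gpdf_logdiff hν t (t*q)).add (integrable_gpdf_log (v := 1) (m := t*q) one_pos)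
    refine h2.congr (Filter.Eventually.of_forall fun y => ?_)
    simp only [Pi.add_apply]
    ring
  have hmain : entInt ν t = ∑ q ∈ ν.support, ν q * ∫ y : ℝ, gpdf 1 (t*q) y * Real.log (pmix ν t y) := by
    unfold entInt
    have heq : (fun x => pmix ν t x * Real.log (pmix ν t x))
        = fun x => ∑ q ∈ ν.support, ν q * (gpdf 1 (t*q) x * Real.log (pmix ν t x)) := by
      funext x
      nth_rewrite 1 [pmix]
      rw [Finset.sum_mul]
      exact Finset.sum_congr rfl fun q _ => by ring
    rw [heq, integral_finset_sum _ hint]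
    exact Finset.sum_congr rfl fun q _ => MeasureTheory.integral_const_mul _ _
  rw [hmain]
  ring

lemma integrable_k_pmix (hs : 0 < s) (hst : s < t) (x : ℝ) :
    Integrable (fun y => kk s t x y * pmix ν t y) := by
  have heq : (fun y => kk s t x y * pmix ν t y)
      = fun y => ∑ q ∈ ν.support, ν q * (gpdf (1-(s/t)^2) ((s/t)*y) x * gpdf 1 (t*q) y) := by
    funext y
    rw [pmix, Finset.mul_sum]
    exact Finset.sum_congr rfl fun q _ => by rw [kk]; ring
  rw [heq]
  exact integrable_finset_sum _ fun q _ =>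
    ((integrable_kernel_gpdf (rho_pos hs hst) (rho_lt_one hs hst) (t*q) x).const_mul _)

lemma integral_k_pmix (hs : 0 < s) (hst : s < t) (x : ℝ) :
    ∫ y : ℝ, kk s t x y * pmix ν t y = pmix ν s x := by
  have heq : (fun y => kk s t x y * pmix ν t y)
      = fun y => ∑ q ∈ ν.support, ν q * (gpdf (1-(s/t)^2) ((s/t)*y) x * gpdf 1 (t*q) y) := by
    funext y
    rw [pmix, Finset.mul_sum]
    exact Finset.sum_congr rfl fun q _ => by rw [kk]; ring
  rw [heq, integral_finset_sum _ fun q _ =>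
    ((integrable_kernel_gpdf (rho_pos hs hst) (rho_lt_one hs hst) (t*q) x).const_mul _)]
  rw [pmix]
  refine Finset.sum_congr rfl fun q _ => ?_
  rw [MeasureTheory.integral_const_mul]
  rw [integral_kernel_gpdf (rho_pos hs hst) (rho_lt_one hs hst) (t*q) x]
  have ht : t ≠ 0 := (hs.trans hst).ne'
  have : (s/t)*(t*q) = s*q := by
    field_simp
  rw [this]

omit hν in
lemma kk_pos (hs : 0 < s) (hst : s < t) : 0 < kk s t x y :=
  gpdf_pos (sig_pos hs hst)

omit hν in
lemma kk_le (hs : 0 < s) (hst : s < t) :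
    kk s t x y ≤ (Real.sqrt (2*Real.pi*(1-(s/t)^2)))⁻¹ :=
  gpdf_le (sig_pos hs hst)

lemma key_ineq (hs : 0 < s) (hst : s < t) (m : ℝ) :
    (∫ y : ℝ, gpdf 1 m y * (Real.log (pmix ν t y) - Real.log (gpdf 1 m y)))
      ≤ ∫ x : ℝ, gpdf 1 ((s/t)*m) x *
          (Real.log (pmix ν s x) - Real.log (gpdf 1 ((s/t)*m) x)) := by
  have hρ0 : 0 < s/t := rho_pos hs hst
  have hρ1 : s/t < 1 := rho_lt_one hs hst
  have hσ : 0 < 1 - (s/t)^2 := sigma2_pos hρ0 hρ1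
  have hγLt : Integrable (fun y => gpdf 1 m y *
      (Real.log (pmix ν t y) - Real.log (gpdf 1 m y))) := integrable_gpdf_logdiff hν t m
  have hcontLt : Continuous (fun y => Real.log (pmix ν t y) - Real.log (gpdf 1 m y)) :=
    ((continuous_pmix.log fun y => (pmix_pos hν).ne').sub
      (continuous_gpdf.log fun y => (gpdf_pos one_pos).ne'))
  -- the function on the product space
  have hFcont : Continuous (fun z : ℝ × ℝ => kk s t z.1 z.2 * (gpdf 1 m z.2 *
      (Real.log (pmix ν t z.2) - Real.log (gpdf 1 m z.2)))) := by
    refine (continuous_kk hs hst).mul ?_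
    exact ((continuous_gpdf.comp continuous_snd).mul (hcontLt.comp continuous_snd))
  have hFint : Integrable (fun z : ℝ × ℝ => kk s t z.1 z.2 * (gpdf 1 m z.2 *
      (Real.log (pmix ν t z.2) - Real.log (gpdf 1 m z.2)))) (volume.prod volume) := by
    rw [integrable_prod_iff' hFcont.aestronglyMeasurable]
    constructor
    · refine Filter.Eventually.of_forall fun y => ?_
      have heq : (fun x => kk s t x y * (gpdf 1 m y *
          (Real.log (pmix ν t y) - Real.log (gpdf 1 m y))))
          = fun x => (gpdf 1 m y * (Real.log (pmix ν t y) - Real.log (gpdf 1 m y)))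
              * gpdf (1-(s/t)^2) ((s/t)*y) x := by
        funext x; rw [kk]; ring
      rw [heq]
      exact (integrable_gpdf hσ).const_mul _
    · have heq : (fun y => ∫ x : ℝ, ‖kk s t x y * (gpdf 1 m y *
          (Real.log (pmix ν t y) - Real.log (gpdf 1 m y)))‖)
          = fun y => |gpdf 1 m y * (Real.log (pmix ν t y) - Real.log (gpdf 1 m y))| := by
        funext y
        have h1 : (fun x => ‖kk s t x y * (gpdf 1 m y *
            (Real.log (pmix ν t y) - Real.log (gpdf 1 m y)))‖)
            = fun x => |gpdf 1 m y * (Real.log (pmix ν t y) - Real.log (gpdf 1 m y))|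
                * gpdf (1-(s/t)^2) ((s/t)*y) x := by
          funext x
          rw [Real.norm_eq_abs, abs_mul, abs_of_nonneg (kk_pos hs hst).le, kk]
          ring
        rw [h1, MeasureTheory.integral_const_mul, integral_gpdf hσ, mul_one]
      rw [heq]
      exact hγLt.abs
  -- Step A : rewrite the LHS as a double integral
  have stepA : (∫ y : ℝ, gpdf 1 m y * (Real.log (pmix ν t y) - Real.log (gpdf 1 m y)))
      = ∫ x : ℝ, ∫ y : ℝ, kk s t x y * (gpdf 1 m y *
          (Real.log (pmix ν t y) - Real.log (gpdf 1 m y))) := by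
    rw [MeasureTheory.integral_integral_swap hFint]
    refine integral_congr_ae (Filter.Eventually.of_forall fun y => ?_)
    dsimp only
    rw [MeasureTheory.integral_mul_const]
    have : ∫ x : ℝ, kk s t x y = 1 := by
      have : (fun x => kk s t x y) = gpdf (1-(s/t)^2) ((s/t)*y) := by
        funext x; rw [kk]
      rw [this, integral_gpdf hσ]
    rw [this, one_mul]
  rw [stepA]
  -- Step B : pointwise inequality for the inner integral
  have stepB : ∀ x : ℝ, (∫ y : ℝ, kk s t x y * (gpdf 1 m y *
      (Real.log (pmix ν t y) - Real.log (gpdf 1 m y))))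
      ≤ gpdf 1 ((s/t)*m) x * (Real.log (pmix ν s x) - Real.log (gpdf 1 ((s/t)*m) x)) := by
    intro x
    have ha : 0 < gpdf 1 ((s/t)*m) x := gpdf_pos one_pos
    have hb : 0 < pmix ν s x := pmix_pos hν
    set a := gpdf 1 ((s/t)*m) x with hadef
    set b := pmix ν s x with hbdef
    have IB1 : Integrable (fun y => kk s t x y * (gpdf 1 m y *
        (Real.log (pmix ν t y) - Real.log (gpdf 1 m y)))) := by
      refine Integrable.mono' (g := fun y => (Real.sqrt (2*Real.pi*(1-(s/t)^2)))⁻¹ *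
          |gpdf 1 m y * (Real.log (pmix ν t y) - Real.log (gpdf 1 m y))|)
        (hγLt.abs.const_mul _) ?_ ?_
      · exact (hFcont.comp (Continuous.prodMk_right x)).aestronglyMeasurable
      · refine Filter.Eventually.of_forall fun y => ?_
        rw [Real.norm_eq_abs, abs_mul, abs_of_nonneg (kk_pos hs hst).le]
        exact mul_le_mul_of_nonneg_right (kk_le hs hst) (abs_nonneg _)
    have IB2 : Integrable (fun y => kk s t x y * pmix ν t y) := integrable_k_pmix hν hs hst x
    have IB3 : Integrable (fun y => kk s t x y * gpdf 1 m y) :=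
      integrable_kernel_gpdf hρ0 hρ1 m x
    have hIntγ : ∫ y : ℝ, kk s t x y * gpdf 1 m y = a := by
      rw [hadef]
      exact integral_kernel_gpdf hρ0 hρ1 m x
    have hIntp : ∫ y : ℝ, kk s t x y * pmix ν t y = b := integral_k_pmix hν hs hst x
    have hpt : ∀ y : ℝ, kk s t x y * (gpdf 1 m y *
        (Real.log (pmix ν t y) - Real.log (gpdf 1 m y)))
        ≤ (a/b) * (kk s t x y * pmix ν t y) - kk s t x y * gpdf 1 m y
          + (Real.log b - Real.log a) * (kk s t x y * gpdf 1 m y) := by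
      intro y
      have hK : 0 < kk s t x y := kk_pos hs hst
      have hG : 0 < gpdf 1 m y := gpdf_pos one_pos
      have hP : 0 < pmix ν t y := pmix_pos hν
      have hu : 0 < a * pmix ν t y / (b * gpdf 1 m y) := by positivity
      have h1 : Real.log (a * pmix ν t y / (b * gpdf 1 m y))
          ≤ a * pmix ν t y / (b * gpdf 1 m y) - 1 := Real.log_le_sub_one_of_pos hu
      have hlogu : Real.log (a * pmix ν t y / (b * gpdf 1 m y))
          = (Real.log a + Real.log (pmix ν t y)) - (Real.log b + Real.log (gpdf 1 m y)) := by
        rw [Real.log_div (by positivity) (by positivity), Real.log_mul ha.ne' hP.ne',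
          Real.log_mul hb.ne' hG.ne']
      have hKG : 0 < kk s t x y * gpdf 1 m y := mul_pos hK hG
      have h2 := mul_le_mul_of_nonneg_left h1 hKG.le
      have h3 : kk s t x y * gpdf 1 m y * (a * pmix ν t y / (b * gpdf 1 m y) - 1)
          = (a/b) * (kk s t x y * pmix ν t y) - kk s t x y * gpdf 1 m y := by
        field_simp
      rw [h3] at h2
      rw [hlogu] at h2
      nlinarith [h2]
    have hsub : Integrable (fun y => (a/b) * (kk s t x y * pmix ν t y)
        - kk s t x y * gpdf 1 m y) := (IB2.const_mul (a/b)).sub IB3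
    have hmul : Integrable (fun y => (Real.log b - Real.log a) * (kk s t x y * gpdf 1 m y)) :=
      IB3.const_mul _
    have hRHS : Integrable (fun y => (a/b) * (kk s t x y * pmix ν t y)
        - kk s t x y * gpdf 1 m y
        + (Real.log b - Real.log a) * (kk s t x y * gpdf 1 m y)) := hsub.add hmul
    have hmono := integral_mono IB1 hRHS hpt
    have hval : (∫ y : ℝ, ((a/b) * (kk s t x y * pmix ν t y) - kk s t x y * gpdf 1 m y
        + (Real.log b - Real.log a) * (kk s t x y * gpdf 1 m y)))
        = a * (Real.log b - Real.log a) := by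
      rw [integral_add hsub hmul]
      rw [integral_sub (IB2.const_mul (a/b)) IB3]
      rw [MeasureTheory.integral_const_mul, MeasureTheory.integral_const_mul, hIntγ, hIntp]
      field_simp
      ring
    calc (∫ y : ℝ, kk s t x y * (gpdf 1 m y *
        (Real.log (pmix ν t y) - Real.log (gpdf 1 m y)))) ≤ _ := hmono
      _ = a * (Real.log b - Real.log a) := hval
      _ = a * (Real.log (pmix ν s x) - Real.log a) := by rw [hbdef]
  -- Step C : integrate the pointwise bound
  exact integral_mono hFint.integral_prod_left
    (integrable_gpdf_logdiff hν s ((s/t)*m)) stepB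

lemma entInt_anti (hs : 0 < s) (hst : s ≤ t) : entInt ν t ≤ entInt ν s := by
  rcases eq_or_lt_of_le hst with h | hlt
  · rw [h]
  · rw [entInt_decomp hν t, entInt_decomp hν s]
    refine add_le_add_right (Finset.sum_le_sum fun q hq => ?_) C0
    refine mul_le_mul_of_nonneg_left ?_ (hν.1 q)
    have h := key_ineq hν hs hlt (t*q)
    have ht : t ≠ 0 := (hs.trans hlt).ne'
    have heq : (s/t)*(t*q) = s*q := by field_simp
    rw [heq] at h
    exact h

lemma smoothEnt_mono (hs : 0 < s) (hst : s ≤ t) : smoothEnt ν s ≤ smoothEnt ν t := by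
  rw [smoothEnt_eq hν s, smoothEnt_eq hν t]
  have h := entInt_anti hν hs hst
  have hl2 : (0:ℝ) < (Real.log 2)⁻¹ := inv_pos.2 (Real.log_pos one_lt_two)
  nlinarith

/-- Uniform lower bound for `smoothEnt`. -/
noncomputable def loB : ℝ := -((Real.log 2)⁻¹ * Real.log ((Real.sqrt (2*Real.pi*1))⁻¹))

/-- Uniform upper bound for `smoothEnt`. -/
noncomputable def hiB (ν : ℝ →₀ ℝ) : ℝ :=
  -((Real.log 2)⁻¹ * ((∑ q ∈ ν.support, ν q * Real.log (ν q)) + C0))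

lemma loB_le (t : ℝ) : loB ≤ smoothEnt ν t := by
  rw [smoothEnt_eq hν t, loB]
  have h := entInt_le hν (t := t)
  have hl2 : (0:ℝ) < (Real.log 2)⁻¹ := inv_pos.2 (Real.log_pos one_lt_two)
  nlinarith

lemma le_hiB (t : ℝ) : smoothEnt ν t ≤ hiB ν := by
  rw [smoothEnt_eq hν t, hiB]
  have h := le_entInt hν (t := t)
  have hl2 : (0:ℝ) < (Real.log 2)⁻¹ := inv_pos.2 (Real.log_pos one_lt_two)
  nlinarith

lemma PhiSet_nonempty (a : ℝ) :
    {r : ℝ | ∃ t : ℝ, 0 < t ∧ r = smoothEnt ν (t * a) - smoothEnt ν t}.Nonempty := by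
  exact ⟨smoothEnt ν (1 * a) - smoothEnt ν 1, 1, one_pos, rfl⟩

lemma PhiSet_bddAbove (a : ℝ) :
    BddAbove {r : ℝ | ∃ t : ℝ, 0 < t ∧ r = smoothEnt ν (t * a) - smoothEnt ν t} := by
  refine ⟨hiB ν - loB, fun r hr => ?_⟩
  obtain ⟨t, ht, rfl⟩ := hr
  have h1 := le_hiB hν (t*a)
  have h2 := loB_le hν t
  linarith

lemma elem_le_Phi {a t : ℝ} (ht : 0 < t) :
    smoothEnt ν (t * a) - smoothEnt ν t ≤ Phi ν a :=
  le_csSup (PhiSet_bddAbove hν a) ⟨t, ht, rfl⟩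

lemma Phi_nonneg {a : ℝ} (ha : 1 ≤ a) : 0 ≤ Phi ν a := by
  have h1 : smoothEnt ν 1 ≤ smoothEnt ν (1 * a) :=
    smoothEnt_mono hν one_pos (by nlinarith)
  have := elem_le_Phi hν (a := a) one_pos
  linarith

lemma Phi_subadd {a b : ℝ} (ha : 0 < a) (hb : 0 < b) :
    Phi ν (a * b) ≤ Phi ν a + Phi ν b := by
  refine csSup_le (PhiSet_nonempty hν _) fun r hr => ?_
  obtain ⟨t, ht, rfl⟩ := hr
  have heq : t * (a * b) = (t * b) * a := by ring
  rw [heq]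
  have h1 : smoothEnt ν ((t * b) * a) - smoothEnt ν (t * b) ≤ Phi ν a :=
    elem_le_Phi hν (mul_pos ht hb)
  have h2 : smoothEnt ν (t * b) - smoothEnt ν t ≤ Phi ν b :=
    elem_le_Phi hν ht
  linarith

lemma Phi_mono {a b : ℝ} (hb : 1 ≤ b) (hba : b ≤ a) : Phi ν b ≤ Phi ν a := by
  refine csSup_le (PhiSet_nonempty hν _) fun r hr => ?_
  obtain ⟨t, ht, rfl⟩ := hr
  have h1 : smoothEnt ν (t * b) ≤ smoothEnt ν (t * a) :=
    smoothEnt_mono hν (mul_pos ht (by linarith)) (by nlinarith)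
  have h2 : smoothEnt ν (t * a) - smoothEnt ν t ≤ Phi ν a := elem_le_Phi hν ht
  linarith

lemma Phi_pow {a : ℝ} (ha : 0 < a) : ∀ n : ℕ, Phi ν (a^(n+1)) ≤ (n+1 : ℝ) * Phi ν a := by
  intro n
  induction n with
  | zero => simp
  | succ k ih =>
      have h1 : a^(k+2) = a^(k+1) * a := by ring
      rw [h1]
      have h2 := Phi_subadd hν (pow_pos ha (k+1)) ha
      push_cast
      push_cast at ih
      linarith


end MonoAux

end Stmt13Aux
/-- With `c = inf_{√2 ≤ a ≤ 2} Φ_ν(a)/log₂ a`, one has `Φ_ν(a) ≥ c·min{log₂ a, 1}` for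
all `a > 1`. -/
theorem stmt13 (ν : ℝ →₀ ℝ) (hν : IsProbFinsuppR ν) (c : ℝ)
    (hc : c = sInf ((fun a => Phi ν a / Real.logb 2 a) '' Set.Icc (Real.sqrt 2) 2)) :
    ∀ a : ℝ, 1 < a → c * min (Real.logb 2 a) 1 ≤ Phi ν a := by
  intro a ha
  have hs2 : (1:ℝ) < Real.sqrt 2 := by
    have h := Real.sqrt_lt_sqrt (by norm_num : (0:ℝ) ≤ 1) (by norm_num : (1:ℝ) < 2)
    simpa using h
  have hs2' : Real.sqrt 2 ≤ 2 := by
    nlinarith [Real.sq_sqrt (by norm_num : (0:ℝ) ≤ 2), Real.sqrt_nonneg 2]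
  have hTne : ((fun a => Phi ν a / Real.logb 2 a) '' Set.Icc (Real.sqrt 2) 2).Nonempty :=
    ⟨_, ⟨2, ⟨hs2', le_refl 2⟩, rfl⟩⟩
  have hT0 : ∀ r ∈ ((fun a => Phi ν a / Real.logb 2 a) '' Set.Icc (Real.sqrt 2) 2), 0 ≤ r := by
    rintro r ⟨x, hx, rfl⟩
    have hx1 : 1 < x := lt_of_lt_of_le hs2 hx.1
    exact div_nonneg (Stmt13Aux.Phi_nonneg hν hx1.le) (Real.logb_pos one_lt_two hx1).le
  have hTbdd : BddBelow ((fun a => Phi ν a / Real.logb 2 a) '' Set.Icc (Real.sqrt 2) 2) :=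
    ⟨0, hT0⟩
  have hc0 : 0 ≤ c := hc ▸ le_csInf hTne hT0
  have hcle : ∀ x, Real.sqrt 2 ≤ x → x ≤ 2 → c * Real.logb 2 x ≤ Phi ν x := by
    intro x h1 h2
    have hx1 : 1 < x := lt_of_lt_of_le hs2 h1
    have hlx : 0 < Real.logb 2 x := Real.logb_pos one_lt_two hx1
    have hle : c ≤ Phi ν x / Real.logb 2 x := hc ▸ csInf_le hTbdd ⟨x, ⟨h1, h2⟩, rfl⟩
    calc c * Real.logb 2 x ≤ (Phi ν x / Real.logb 2 x) * Real.logb 2 x :=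
          mul_le_mul_of_nonneg_right hle hlx.le
      _ = Phi ν x := div_mul_cancel₀ _ hlx.ne'
  have hD : 0 < Real.logb 2 a := Real.logb_pos one_lt_two ha
  rcases le_or_gt a 2 with hle2 | hgt2
  · have hkey : c * Real.logb 2 a ≤ Phi ν a := by
      rcases le_or_gt (Real.sqrt 2) a with hge | hlt
      · exact hcle a hge hle2
      · classical
        obtain ⟨n0, hn0⟩ := pow_unbounded_of_one_lt (Real.sqrt 2) ha
        have hex : ∃ n : ℕ, Real.sqrt 2 ≤ a ^ n := ⟨n0, hn0.le⟩
        have hfind : Real.sqrt 2 ≤ a ^ (Nat.find hex) := Nat.find_spec hex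
        have hnz : Nat.find hex ≠ 0 := by
          intro h0
          rw [h0, pow_zero] at hfind
          linarith
        obtain ⟨k, hk⟩ : ∃ k, Nat.find hex = k + 1 :=
          ⟨Nat.find hex - 1, (Nat.succ_pred_eq_of_pos (Nat.pos_of_ne_zero hnz)).symm⟩
        have hklt : a ^ k < Real.sqrt 2 := by
          by_contra hcon
          push_neg at hcon
          have hle : Nat.find hex ≤ k := Nat.find_le hcon
          omega
        have hup : a ^ (Nat.find hex) ≤ 2 := by
          have h1 : a ^ (Nat.find hex) = a ^ k * a := by rw [hk]; ring
          have h2 : a ^ k * a < Real.sqrt 2 * Real.sqrt 2 :=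
            mul_lt_mul'' hklt hlt (by positivity) (by linarith)
          rw [Real.mul_self_sqrt (by norm_num : (0:ℝ) ≤ 2)] at h2
          linarith [h1 ▸ h2]
        have hlogn : Real.logb 2 (a ^ (Nat.find hex))
            = (Nat.find hex : ℝ) * Real.logb 2 a := Real.logb_pow 2 a (Nat.find hex)
        have hcn : c * ((Nat.find hex : ℝ) * Real.logb 2 a) ≤ Phi ν (a ^ (Nat.find hex)) := by
          have h3 := hcle (a ^ (Nat.find hex)) hfind hup
          rw [hlogn] at h3
          exact h3
        have hPn : Phi ν (a ^ (Nat.find hex)) ≤ (Nat.find hex : ℝ) * Phi ν a := by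
          have h4 := Stmt13Aux.Phi_pow hν (by linarith : (0:ℝ) < a) k
          rw [hk]
          push_cast
          push_cast at h4
          linarith
        have hn0' : (0:ℝ) < (Nat.find hex : ℝ) :=
          Nat.cast_pos.2 (Nat.pos_of_ne_zero hnz)
        have h5 : (Nat.find hex : ℝ) * (c * Real.logb 2 a)
            ≤ (Nat.find hex : ℝ) * Phi ν a := by nlinarith
        exact le_of_mul_le_mul_left h5 hn0'
    calc c * min (Real.logb 2 a) 1 ≤ c * Real.logb 2 a :=
          mul_le_mul_of_nonneg_left (min_le_left _ _) hc0
      _ ≤ Phi ν a := hkey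
  · have hmin : min (Real.logb 2 a) 1 = 1 := by
      refine min_eq_right ?_
      have h6 : Real.logb 2 2 ≤ Real.logb 2 a :=
        Real.logb_le_logb_of_le one_lt_two (by norm_num) hgt2.le
      rwa [Real.logb_self_eq_one one_lt_two] at h6
    rw [hmin, mul_one]
    have h2 : c * Real.logb 2 2 ≤ Phi ν 2 := hcle 2 hs2' le_rfl
    rw [Real.logb_self_eq_one one_lt_two, mul_one] at h2
    exact h2.trans (Stmt13Aux.Phi_mono hν one_le_two hgt2.le)
end

section
/- Let S be a finite subset of Aff(ℂ) containing the identity, and suppose the group ⟨S⟩ generated by S is not virtually nilpotent. Then there exist g, γ ∈ S³ (products of three elements of S), an element λ ∈ ℂ^× that is not a root of unity, and h ∈ Aff(ℂ), such that h g h^{−1} = g_{λ,1} and h γ h^{−1} = g_{λ,−1}. -/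
open scoped Pointwise

/-- A group is virtually nilpotent if it has a nilpotent subgroup of finite index. -/
def IsVirtuallyNilpotent (G : Type*) [Group G] : Prop :=
  ∃ H : Subgroup G, Group.IsNilpotent H ∧ H.FiniteIndex

noncomputable section
namespace Stmt16Aux
def mult (e : ℂ ≃ᵃ[ℂ] ℂ) : ℂ := e.linear 1
lemma mult_ne_zero (e : ℂ ≃ᵃ[ℂ] ℂ) : mult e ≠ 0 := by
  intro h
  have h2 : e.linear 1 = e.linear 0 := by rw [map_zero]; exact h
  exact one_ne_zero (e.linear.injective h2)
lemma lin_apply (e : ℂ ≃ᵃ[ℂ] ℂ) (x : ℂ) : e.linear x = x * mult e := by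
  have := e.linear.map_smul x 1
  simpa [smul_eq_mul, mult] using this
lemma apply_eq (e : ℂ ≃ᵃ[ℂ] ℂ) (x : ℂ) : e x = mult e * x + e 0 := by
  have h := e.map_vadd (0:ℂ) x
  simp [vadd_eq_add] at h
  rw [h, lin_apply]; ring
lemma mult_mul (e f : ℂ ≃ᵃ[ℂ] ℂ) : mult (e * f) = mult e * mult f := by
  have h : mult (e * f) = e.linear (f.linear 1) := rfl
  rw [h, lin_apply, show f.linear 1 = mult f from rfl]; ring
lemma mult_one : mult 1 = 1 := rfl
lemma eq_of (e f : ℂ ≃ᵃ[ℂ] ℂ) (h1 : mult e = mult f) (h2 : e 0 = f 0) : e = f :=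
  AffineEquiv.ext fun x => by rw [apply_eq e x, apply_eq f x, h1, h2]
def multHom : (ℂ ≃ᵃ[ℂ] ℂ) →* ℂˣ where
  toFun e := Units.mk0 (mult e) (mult_ne_zero e)
  map_one' := by ext; simp [mult_one]
  map_mul' e f := by ext; simp [mult_mul]

def affMk (p q : ℂ) (hp : p ≠ 0) : ℂ ≃ᵃ[ℂ] ℂ :=
  (LinearEquiv.smulOfNeZero ℂ ℂ p hp).toAffineEquiv.trans (AffineEquiv.constVAdd ℂ ℂ q)

lemma affMk_apply (p q : ℂ) (hp : p ≠ 0) (x : ℂ) : affMk p q hp x = p * x + q := by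
  simp [affMk, AffineEquiv.trans_apply, LinearEquiv.smulOfNeZero, LinearEquiv.smulOfUnit,
    Units.smul_def, smul_eq_mul, vadd_eq_add]
  ring

/-- conjugation to normal form -/
lemma final (g γ : ℂ ≃ᵃ[ℂ] ℂ) (hne : g ≠ γ) (hm : mult g = mult γ) (hΛ1 : mult g ≠ 1) :
    ∃ h : ℂ ≃ᵃ[ℂ] ℂ, (∀ x, (h * g * h⁻¹) x = mult g * x + 1) ∧
      (∀ x, (h * γ * h⁻¹) x = mult g * x - 1) := by
  set Λ := mult g with hΛ
  have hbc : g 0 ≠ γ 0 := fun h => hne (eq_of _ _ hm h)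
  set b := g 0 with hb
  set c := γ 0 with hc
  have hbc' : b - c ≠ 0 := sub_ne_zero.mpr hbc
  have h1Λ : (1:ℂ) - Λ ≠ 0 := sub_ne_zero.mpr (Ne.symm hΛ1)
  set p := 2 / (b - c) with hpdef
  have hp : p ≠ 0 := div_ne_zero two_ne_zero hbc'
  set q := (1 - p * b) / (1 - Λ) with hqdef
  have hq : q * (1 - Λ) = 1 - p * b := div_mul_cancel₀ _ h1Λ
  have hp2 : p * (b - c) = 2 := div_mul_cancel₀ _ hbc'
  set h := affMk p q hp with hh
  have hinv : ∀ x : ℂ, h (h⁻¹ x) = x := by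
    intro x
    have h1 : h * h⁻¹ = 1 := mul_inv_cancel h
    exact congrArg (fun e : ℂ ≃ᵃ[ℂ] ℂ => e x) h1
  refine ⟨h, ?_, ?_⟩
  · intro x
    show h (g (h⁻¹ x)) = Λ * x + 1
    set y := h⁻¹ x with hy
    have hx : h y = x := hinv x
    calc h (g y) = p * (g y) + q := affMk_apply p q hp _
      _ = p * (Λ * y + b) + q := by rw [apply_eq g y]
      _ = Λ * (p * y + q) + 1 := by linear_combination hq
      _ = Λ * (h y) + 1 := by rw [affMk_apply p q hp y]
      _ = Λ * x + 1 := by rw [hx]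
  · intro x
    show h (γ (h⁻¹ x)) = Λ * x - 1
    set y := h⁻¹ x with hy
    have hx : h y = x := hinv x
    calc h (γ y) = p * (γ y) + q := affMk_apply p q hp _
      _ = p * (mult γ * y + c) + q := by rw [apply_eq γ y]
      _ = Λ * (p * y + q) - 1 := by rw [← hm]; linear_combination hq - hp2
      _ = Λ * (h y) - 1 := by rw [affMk_apply p q hp y]
      _ = Λ * x - 1 := by rw [hx]


lemma step1 (S : Finset (ℂ ≃ᵃ[ℂ] ℂ))
    (hcon : ∀ s ∈ S, ∃ k : ℕ, 0 < k ∧ (mult s) ^ k = 1) :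
    ∃ H : Subgroup (Subgroup.closure (S : Set (ℂ ≃ᵃ[ℂ] ℂ))),
      Group.IsNilpotent H ∧ H.FiniteIndex := by
  classical
  set G := Subgroup.closure (S : Set (ℂ ≃ᵃ[ℂ] ℂ)) with hG
  set f : ↥G →* ℂˣ := multHom.comp G.subtype with hf
  refine ⟨f.ker, ?_, ?_⟩
  · -- kernel is commutative, hence nilpotent
    have hcomm : ∀ a b : ↥f.ker, a * b = b * a := by
      rintro ⟨⟨a, haG⟩, ha⟩ ⟨⟨b, hbG⟩, hb⟩
      rw [MonoidHom.mem_ker] at ha hb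
      have ha1 : mult a = 1 := by
        have := congrArg Units.val ha
        simpa [f, multHom] using this
      have hb1 : mult b = 1 := by
        have := congrArg Units.val hb
        simpa [f, multHom] using this
      have key : a * b = b * a := by
        apply eq_of
        · rw [mult_mul, mult_mul]; ring
        · rw [show (a * b) 0 = a (b 0) from rfl, show (b * a) 0 = b (a 0) from rfl,
            apply_eq a (b 0), apply_eq b (a 0), ha1, hb1]
          ring
      exact Subtype.ext (Subtype.ext key)
    letI : CommGroup ↥f.ker := { (inferInstance : Group ↥f.ker) with mul_comm := hcomm }
    infer_instance
  · -- finite index : the range of f is finite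
    choose k hkpos hk1 using hcon
    set N : ℕ := ∏ s ∈ S.attach, k s s.2 with hN
    have hNpos : 0 < N := Finset.prod_pos (fun i _ => hkpos _ _)
    have hpow : ∀ s ∈ S, (multHom s) ^ N = 1 := by
      intro s hs
      have h1 : (multHom s) ^ (k s hs) = 1 := by
        ext
        simpa [multHom] using hk1 s hs
      have h2 : orderOf (multHom s) ∣ N := by
        refine dvd_trans (orderOf_dvd_of_pow_eq_one h1) ?_
        exact Finset.dvd_prod_of_mem _ (Finset.mem_attach S ⟨s, hs⟩)
      exact orderOf_dvd_iff_pow_eq_one.mp h2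
    have hr : f.range ≤ (powMonoidHom N : ℂˣ →* ℂˣ).ker := by
      rw [hf, MonoidHom.range_comp, Subgroup.range_subtype, hG, MonoidHom.map_closure]
      rw [Subgroup.closure_le]
      rintro x ⟨s, hs, rfl⟩
      simp only [SetLike.mem_coe, MonoidHom.mem_ker, powMonoidHom_apply]
      exact hpow s hs
    have hfin : ({x : ℂˣ | x ^ N = 1} : Set ℂˣ).Finite := by
      have h1 : ({z : ℂ | z ^ N = 1}).Finite := by
        have hne : (Polynomial.X ^ N - Polynomial.C 1 : Polynomial ℂ) ≠ 0 :=
          Polynomial.X_pow_sub_C_ne_zero hNpos 1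
        refine (Polynomial.finite_setOf_isRoot hne).subset ?_
        intro z hz
        simp [Polynomial.IsRoot, sub_eq_zero]
        exact hz
      have heq : ({x : ℂˣ | x ^ N = 1} : Set ℂˣ) = Units.val ⁻¹' {z : ℂ | z ^ N = 1} := by
        ext x
        simp [Units.ext_iff]
      rw [heq]
      exact Set.Finite.preimage (Set.injOn_of_injective Units.val_injective) h1
    have hfin2 : Finite ↥f.range := by
      have : ((f.range : Set ℂˣ)).Finite := hfin.subset (fun x hx => hr hx)
      exact this.to_subtype
    haveI := hfin2
    exact Subgroup.finiteIndex_ker f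


end Stmt16Aux
end

open Stmt16Aux in
/-- If `S ⊆ Aff(ℂ)` is finite, contains the identity, and generates a non-virtually-nilpotent
group, then there are `g, γ ∈ S³`, some `λ ∈ ℂ^×` not a root of unity, and `h ∈ Aff(ℂ)` such
that `h g h⁻¹ = g_{λ,1} : x ↦ λx + 1` and `h γ h⁻¹ = g_{λ,−1} : x ↦ λx − 1`. Here `Aff(ℂ)`
is realized as the group of affine automorphisms of the complex line. -/
theorem stmt16 (S : Finset (ℂ ≃ᵃ[ℂ] ℂ)) (hone : (1 : ℂ ≃ᵃ[ℂ] ℂ) ∈ S)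
    (hnn : ¬ IsVirtuallyNilpotent (Subgroup.closure (S : Set (ℂ ≃ᵃ[ℂ] ℂ)))) :
    ∃ g ∈ (S : Set (ℂ ≃ᵃ[ℂ] ℂ)) * (S : Set (ℂ ≃ᵃ[ℂ] ℂ)) * (S : Set (ℂ ≃ᵃ[ℂ] ℂ)),
    ∃ γ ∈ (S : Set (ℂ ≃ᵃ[ℂ] ℂ)) * (S : Set (ℂ ≃ᵃ[ℂ] ℂ)) * (S : Set (ℂ ≃ᵃ[ℂ] ℂ)),
    ∃ lam : ℂ, lam ≠ 0 ∧ (¬ ∃ k : ℕ, 0 < k ∧ lam ^ k = 1) ∧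
    ∃ h : ℂ ≃ᵃ[ℂ] ℂ,
      (∀ x : ℂ, (h * g * h⁻¹) x = lam * x + 1) ∧
      (∀ x : ℂ, (h * γ * h⁻¹) x = lam * x - 1) := by
  classical
  have honeS : (1 : ℂ ≃ᵃ[ℂ] ℂ) ∈ (S : Set (ℂ ≃ᵃ[ℂ] ℂ)) := hone
  -- Step 1
  have hstep1 : ∃ s ∈ S, ¬ ∃ k : ℕ, 0 < k ∧ (mult s) ^ k = 1 := by
    by_contra hcon
    push_neg at hcon
    exact hnn (step1 S hcon)
  obtain ⟨s, hsS, hs⟩ := hstep1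
  set lam0 := mult s with hlam0def
  have hlam0 : lam0 ≠ 0 := mult_ne_zero s
  have hlam1 : lam0 ≠ 1 := fun h => hs ⟨1, one_pos, by rw [h]; simp⟩
  set x₀ : ℂ := s 0 / (1 - lam0) with hx₀def
  have h1l : (1:ℂ) - lam0 ≠ 0 := sub_ne_zero.mpr (Ne.symm hlam1)
  have hx₀ : s x₀ = x₀ := by
    rw [apply_eq s x₀, hx₀def]
    field_simp
    ring
  have huniq : ∀ y : ℂ, s y = y → y = x₀ := by
    intro y hy
    rw [apply_eq s y] at hy
    rw [hx₀def, eq_div_iff h1l]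
    linear_combination -hy
  -- Step 3 : some t ∈ S moves x₀
  have hstep3 : ∃ t ∈ S, t x₀ ≠ x₀ := by
    by_contra hcon
    push_neg at hcon
    apply hnn
    set G := Subgroup.closure (S : Set (ℂ ≃ᵃ[ℂ] ℂ)) with hG
    set St : Subgroup (ℂ ≃ᵃ[ℂ] ℂ) :=
      { carrier := {e | e x₀ = x₀}
        one_mem' := rfl
        mul_mem' := by
          intro a b ha hb
          show (a * b) x₀ = x₀
          rw [show (a * b) x₀ = a (b x₀) from rfl, hb, ha]
        inv_mem' := by
          intro a ha
          show a⁻¹ x₀ = x₀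
          have : a⁻¹ (a x₀) = x₀ := by
            have h1 : a⁻¹ * a = 1 := inv_mul_cancel a
            exact congrArg (fun e : ℂ ≃ᵃ[ℂ] ℂ => e x₀) h1
          rw [ha] at this
          exact this } with hSt
    have hle : G ≤ St := (Subgroup.closure_le St).mpr (fun t ht => hcon t ht)
    have hfix : ∀ g : ↥G, (g : ℂ ≃ᵃ[ℂ] ℂ) x₀ = x₀ := fun g => hle g.2
    have key : ∀ c : ↥G, (c : ℂ ≃ᵃ[ℂ] ℂ) 0 = x₀ - mult (c : ℂ ≃ᵃ[ℂ] ℂ) * x₀ := by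
      intro c
      have h1 := hfix c
      rw [apply_eq _ x₀] at h1
      linear_combination h1
    have hcomm : ∀ a b : ↥G, a * b = b * a := by
      intro a b
      apply Subtype.ext
      show (a : ℂ ≃ᵃ[ℂ] ℂ) * b = (b : ℂ ≃ᵃ[ℂ] ℂ) * a
      apply eq_of
      · rw [mult_mul, mult_mul]; ring
      · have expand : ∀ u v : ℂ ≃ᵃ[ℂ] ℂ, (u * v) 0 = mult u * (v 0) + u 0 := fun u v => by
          rw [show (u * v) 0 = u (v 0) from rfl, apply_eq u (v 0)]
        rw [expand, expand, key a, key b]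
        ring
    refine ⟨⊤, ?_, inferInstance⟩
    have hcommtop : ∀ a b : ↥(⊤ : Subgroup ↥G), a * b = b * a := by
      intro a b
      exact Subtype.ext (hcomm a b)
    letI : CommGroup ↥(⊤ : Subgroup ↥G) :=
      { (inferInstance : Group ↥(⊤ : Subgroup ↥G)) with mul_comm := hcommtop }
    infer_instance
  obtain ⟨t, htS, ht⟩ := hstep3
  set mu := mult t with hmudef
  have hst : s * t ≠ t * s := by
    intro h
    apply ht
    have h1 : s (t x₀) = t (s x₀) := congrArg (fun e : ℂ ≃ᵃ[ℂ] ℂ => e x₀) h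
    rw [hx₀] at h1
    exact huniq _ h1
  have hsS' : s ∈ (S : Set (ℂ ≃ᵃ[ℂ] ℂ)) := hsS
  have htS' : t ∈ (S : Set (ℂ ≃ᵃ[ℂ] ℂ)) := htS
  by_cases hcase : ∃ k : ℕ, 0 < k ∧ (lam0 * mu) ^ k = 1
  · -- use g = s*s*t, γ = s*t*s
    obtain ⟨k, hkpos, hk1⟩ := hcase
    have hrou : ¬ ∃ j : ℕ, 0 < j ∧ (mult (s * s * t)) ^ j = 1 := by
      rintro ⟨j, hjpos, hj1⟩
      apply hs
      refine ⟨j * k, Nat.mul_pos hjpos hkpos, ?_⟩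
      have e1 : (lam0 * mu) ^ (j * k) = 1 := by
        rw [show j * k = k * j from Nat.mul_comm j k, pow_mul, hk1, one_pow]
      have e2 : (mult (s * s * t)) ^ (j * k) = 1 := by
        rw [pow_mul, hj1, one_pow]
      have e3 : mult (s * s * t) = lam0 * (lam0 * mu) := by
        rw [mult_mul, mult_mul]; ring
      have e4 : lam0 ^ (j * k) * (lam0 * mu) ^ (j * k) = (lam0 * (lam0 * mu)) ^ (j * k) := by
        ring
      rw [e1, mul_one] at e4
      rw [e4, ← e3]
      exact e2
    refine ⟨s * s * t, Set.mul_mem_mul (Set.mul_mem_mul hsS' hsS') htS',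
      s * t * s, Set.mul_mem_mul (Set.mul_mem_mul hsS' htS') hsS',
      mult (s * s * t), mult_ne_zero _, ?_, ?_⟩
    · exact hrou
    · have hne : s * s * t ≠ s * t * s := by
        intro h
        apply hst
        rw [mul_assoc, mul_assoc] at h
        exact mul_left_cancel h
      have hm : mult (s * s * t) = mult (s * t * s) := by
        rw [mult_mul, mult_mul, mult_mul, mult_mul]; ring
      have hΛ1 : mult (s * s * t) ≠ 1 := fun h =>
        hrou ⟨1, one_pos, by rw [pow_one]; exact h⟩
      exact final _ _ hne hm hΛ1
  · refine ⟨s * t * 1, Set.mul_mem_mul (Set.mul_mem_mul hsS' htS') honeS,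
      t * s * 1, Set.mul_mem_mul (Set.mul_mem_mul htS' hsS') honeS,
      mult (s * t * 1), mult_ne_zero _, ?_, ?_⟩
    · rintro ⟨j, hjpos, hj1⟩
      apply hcase
      refine ⟨j, hjpos, ?_⟩
      have e3 : mult (s * t * 1) = lam0 * mu := by
        rw [mult_mul, mult_mul, mult_one]; ring
      rw [← e3]; exact hj1
    · have hne : s * t * 1 ≠ t * s * 1 := by
        simpa [mul_one] using hst
      have hm : mult (s * t * 1) = mult (t * s * 1) := by
        rw [mult_mul, mult_mul, mult_mul, mult_mul]; ring
      have hΛ1 : mult (s * t * 1) ≠ 1 := by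
        intro h
        apply hcase
        refine ⟨1, one_pos, ?_⟩
        have e3 : mult (s * t * 1) = lam0 * mu := by
          rw [mult_mul, mult_mul, mult_one]; ring
        rw [pow_one, ← e3]; exact h
      exact final _ _ hne hm hΛ1
end
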